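/- arXiv:2008.06829 — 6 statements merged into one kernel-verified Lean document; each statement's English description precedes it below -/
import Mathlib

section
/- For every real z > 0, the ratio K₁(z)/K₀(z) of modified Bessel functions of the second kind satisfies the two-sided bound (√(z² + z + 1) + 1)/(z + 1) < K₁(z)/K₀(z) < 1 + 1/(2z). -/
open Real

section Aux
open MeasureTheory Set Filter

/-- quadratic lower bound for cosh on nonneg reals -/
lemma cosh_quad_le {t : ℝ} (ht : 0 ≤ t) : (1 + t / 2) ^ 2 / 2 ≤ Real.cosh t := by
  have h1 : 1 + t / 2 ≤ Real.exp (t / 2) := by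
    have := Real.add_one_le_exp (t / 2); linarith
  have h2 : (1 + t / 2) ^ 2 ≤ Real.exp (t / 2) ^ 2 :=
    pow_le_pow_left₀ (by linarith) h1 2
  have h3 : Real.exp (t / 2) ^ 2 = Real.exp t := by
    rw [sq, ← Real.exp_add]; ring_nf
  have h4 : Real.exp t ≤ 2 * Real.cosh t := by
    rw [Real.cosh_eq]
    have := Real.exp_pos (-t)
    linarith
  nlinarith

lemma cosh_le_exp_self {t : ℝ} (ht : 0 ≤ t) : Real.cosh t ≤ Real.exp t := by
  rw [Real.cosh_eq]
  have h1 : Real.exp (-t) ≤ Real.exp t := Real.exp_le_exp.mpr (by linarith)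
  linarith

lemma int_master {z : ℝ} (hz : 0 < z) (a : ℝ) :
    IntegrableOn (fun t => Real.exp (-z * Real.cosh t + a * t)) (Ioi (0:ℝ)) := by
  have hint : IntegrableOn (fun t => Real.exp (2 * (a+1)^2 / z) * Real.exp (-1 * t))
      (Ioi (0:ℝ)) := (exp_neg_integrableOn_Ioi 0 one_pos).const_mul _
  apply Integrable.mono' hint
  · exact (Real.continuous_exp.comp
      ((continuous_const.mul Real.continuous_cosh).add
        (continuous_const.mul continuous_id))).aestronglyMeasurable
  · filter_upwards [ae_restrict_mem measurableSet_Ioi] with t (ht : 0 < t)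
    rw [Real.norm_eq_abs, abs_of_pos (Real.exp_pos _), ← Real.exp_add]
    apply Real.exp_le_exp.mpr
    have hc := cosh_quad_le ht.le
    have key : z * ((a + 1) * t) ≤ 2 * (a+1)^2 + z * (z * Real.cosh t) := by
      nlinarith [sq_nonneg (2 * (a+1) - z * t / 2), sq_nonneg (z * t), hz.le, ht.le,
        mul_le_mul_of_nonneg_left hc (mul_pos hz hz).le]
    have h2 : (a + 1) * t ≤ 2 * (a+1)^2 / z + z * Real.cosh t := by
      rw [div_add' _ _ _ hz.ne', le_div_iff₀ hz]
      nlinarith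
    linarith

lemma int_weight {z : ℝ} (hz : 0 < z) (w : ℝ → ℝ) (hw : Continuous w) (M a : ℝ)
    (hbound : ∀ t, 0 < t → |w t| ≤ M * Real.exp (a * t)) :
    IntegrableOn (fun t => Real.exp (-z * Real.cosh t) * w t) (Ioi (0:ℝ)) := by
  apply Integrable.mono' ((int_master hz a).const_mul M)
  · exact ((Real.continuous_exp.comp
      (continuous_const.mul Real.continuous_cosh)).mul hw).aestronglyMeasurable
  · filter_upwards [ae_restrict_mem measurableSet_Ioi] with t (ht : 0 < t)
    rw [Real.norm_eq_abs, abs_mul, abs_of_pos (Real.exp_pos _), Real.exp_add, ← mul_assoc,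
      mul_comm M (Real.exp (-z * Real.cosh t)), mul_assoc]
    exact mul_le_mul_of_nonneg_left (hbound t ht) (Real.exp_pos _).le

lemma pos_helper {g : ℝ → ℝ} (hint : MeasureTheory.IntegrableOn g (Set.Ioi 0))
    (hpos : ∀ t, 0 < t → 0 < g t) :
    0 < ∫ t in Set.Ioi (0:ℝ), g t := by
  have hae : 0 ≤ᵐ[MeasureTheory.volume.restrict (Set.Ioi 0)] g :=
    (MeasureTheory.ae_restrict_iff' measurableSet_Ioi).mpr
      (Filter.Eventually.of_forall fun t ht => (hpos t ht).le)
  rw [MeasureTheory.setIntegral_pos_iff_support_of_nonneg_ae hae hint]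
  have hsub : Set.Ioi (0:ℝ) ⊆ Function.support g ∩ Set.Ioi 0 :=
    fun t ht => ⟨Function.mem_support.mpr (hpos t ht).ne', ht⟩
  calc (0:ENNReal) < MeasureTheory.volume (Set.Ioi (0:ℝ)) := by simp [Real.volume_Ioi]
    _ ≤ _ := MeasureTheory.measure_mono hsub

end Aux

/-- Modified Bessel function of the second kind of order `j`:
`K_j(z) = ∫₀^∞ exp (−z cosh t) * cosh (j t) dt`. -/
noncomputable def besselK (j : ℕ) (z : ℝ) : ℝ :=
  ∫ t in Set.Ioi (0 : ℝ), Real.exp (-z * Real.cosh t) * Real.cosh ((j : ℝ) * t)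

set_option maxHeartbeats 1000000 in
open MeasureTheory Set Filter in
theorem bessel_ratio_bounds (z : ℝ) (hz : 0 < z) :
    (Real.sqrt (z ^ 2 + z + 1) + 1) / (z + 1) < besselK 1 z / besselK 0 z ∧
    besselK 1 z / besselK 0 z < 1 + 1 / (2 * z) := by
  classical
  set E : ℝ → ℝ := fun t => Real.exp (-z * Real.cosh t) with hE
  have hEcont : Continuous E := Real.continuous_exp.comp (continuous_const.mul Real.continuous_cosh)
  have hEpos : ∀ t, 0 < E t := fun t => Real.exp_pos _
  have hcpos : ∀ t : ℝ, (0:ℝ) < Real.cosh t + 1 := fun t => by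
    have := Real.one_le_cosh t; linarith
  -- integrability facts
  have intB : IntegrableOn E (Ioi 0) := by
    have := int_weight hz (fun _ => (1:ℝ)) continuous_const 1 0 (fun t ht => by norm_num)
    simpa only [mul_one] using this
  have intK1 : IntegrableOn (fun t => E t * Real.cosh t) (Ioi 0) := by
    refine int_weight hz _ Real.continuous_cosh 1 1 (fun t ht => ?_)
    rw [abs_of_pos (Real.cosh_pos t), one_mul, one_mul]
    exact cosh_le_exp_self ht.le
  have intA : IntegrableOn (fun t => E t * (Real.cosh t + 1)) (Ioi 0) := by
    refine int_weight hz _ (Real.continuous_cosh.add continuous_const) 2 1 (fun t ht => ?_)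
    rw [abs_of_pos (hcpos t), one_mul]
    have h1 := cosh_le_exp_self ht.le
    have h2 : (1:ℝ) ≤ Real.exp t := Real.one_le_exp ht.le
    nlinarith
  have intD : IntegrableOn (fun t => E t * (Real.cosh t - 1)) (Ioi 0) := by
    refine int_weight hz _ (Real.continuous_cosh.sub continuous_const) 1 1 (fun t ht => ?_)
    have h0 := Real.one_le_cosh t
    rw [abs_of_nonneg (by linarith), one_mul, one_mul]
    have h1 := cosh_le_exp_self ht.le
    linarith
  have intC : IntegrableOn (fun t => E t * (Real.cosh t + 1)⁻¹) (Ioi 0) := by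
    refine int_weight hz _ ((Real.continuous_cosh.add continuous_const).inv₀
      (fun t => (hcpos t).ne')) 1 0 (fun t ht => ?_)
    rw [abs_of_pos (inv_pos.mpr (hcpos t)), zero_mul, Real.exp_zero, one_mul]
    have h0 := Real.one_le_cosh t
    have h1 : (1:ℝ) ≤ Real.cosh t + 1 := by linarith
    calc (Real.cosh t + 1)⁻¹ ≤ 1⁻¹ := by
          apply inv_anti₀ one_pos h1
      _ = 1 := inv_one
  have intU : IntegrableOn (fun t => E t * ((Real.cosh t - 1) * (Real.cosh t + 1)⁻¹)) (Ioi 0) := by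
    refine int_weight hz _ ((Real.continuous_cosh.sub continuous_const).mul
      ((Real.continuous_cosh.add continuous_const).inv₀ (fun t => (hcpos t).ne'))) 1 1
      (fun t ht => ?_)
    have h0 := Real.one_le_cosh t
    have h1 := hcpos t
    have h2 : 0 ≤ (Real.cosh t - 1) * (Real.cosh t + 1)⁻¹ :=
      mul_nonneg (by linarith) (inv_pos.mpr h1).le
    rw [abs_of_nonneg h2, one_mul, one_mul]
    have h3 : (Real.cosh t - 1) * (Real.cosh t + 1)⁻¹ ≤ Real.cosh t - 1 := by
      rw [mul_inv_le_iff₀ h1]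
      nlinarith
    have h4 := cosh_le_exp_self ht.le
    linarith
  -- names for the integrals
  set B := ∫ t in Ioi (0:ℝ), E t with hBdef
  set K1 := ∫ t in Ioi (0:ℝ), E t * Real.cosh t with hK1def
  set C := ∫ t in Ioi (0:ℝ), E t * (Real.cosh t + 1)⁻¹ with hCdef
  set D := ∫ t in Ioi (0:ℝ), E t * (Real.cosh t - 1) with hDdef
  set A := ∫ t in Ioi (0:ℝ), E t * (Real.cosh t + 1) with hAdef
  -- besselK values
  have hbK0 : besselK 0 z = B := by
    rw [hBdef, hE]
    simp only [besselK, Nat.cast_zero, zero_mul, Real.cosh_zero, mul_one]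
  have hbK1 : besselK 1 z = K1 := by
    rw [hK1def, hE]
    simp only [besselK, Nat.cast_one, one_mul]
  -- linear relations
  have hAval : A = K1 + B := by
    rw [hAdef, hK1def, hBdef, ← integral_add intK1 intB]
    congr 1; ext t; ring
  have hDval : D = K1 - B := by
    rw [hDdef, hK1def, hBdef, ← integral_sub intK1 intB]
    congr 1; ext t; ring
  -- positivity of B and D
  have hBpos : 0 < B := by
    rw [hBdef]
    exact pos_helper intB (fun t _ => hEpos t)
  have hDpos : 0 < D := by
    rw [hDdef]
    refine pos_helper intD (fun t ht => ?_)
    have h1 : 1 < Real.cosh t := Real.one_lt_cosh.mpr (ne_of_gt ht)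
    exact mul_pos (hEpos t) (by linarith)
  -- strict inequality  B - 2*C > 0
  have hU : 0 < B - 2 * C := by
    have heq : B - 2 * C
        = ∫ t in Ioi (0:ℝ), E t * ((Real.cosh t - 1) * (Real.cosh t + 1)⁻¹) := by
      rw [hBdef, hCdef, ← integral_const_mul, ← integral_sub intB (intC.const_mul 2)]
      apply setIntegral_congr_fun measurableSet_Ioi
      intro t _
      have h1 := (hcpos t).ne'
      field_simp
      ring
    rw [heq]
    refine pos_helper intU (fun t ht => ?_)
    have h1 : 1 < Real.cosh t := Real.one_lt_cosh.mpr (ne_of_gt ht)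
    exact mul_pos (hEpos t) (mul_pos (by linarith) (inv_pos.mpr (hcpos t)))
  -- the integration-by-parts identity : z * D = C
  have hIBP : z * D = C := by
    set F : ℝ → ℝ := fun t => -(E t * (Real.sinh t / (Real.cosh t + 1))) with hF
    set f' : ℝ → ℝ := fun t =>
      z * (E t * (Real.cosh t - 1)) - E t * (Real.cosh t + 1)⁻¹ with hf'
    have hderiv : ∀ t : ℝ, HasDerivAt F (f' t) t := by
      intro t
      have hne := (hcpos t).ne'
      have h1 : HasDerivAt (fun t : ℝ => -z * Real.cosh t) (-z * Real.sinh t) t :=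
        (Real.hasDerivAt_cosh t).const_mul (-z)
      have h2 : HasDerivAt E (Real.exp (-z * Real.cosh t) * (-z * Real.sinh t)) t := h1.exp
      have h3 : HasDerivAt (fun t : ℝ => Real.sinh t / (Real.cosh t + 1))
          ((Real.cosh t * (Real.cosh t + 1) - Real.sinh t * Real.sinh t) /
            ((Real.cosh t + 1) ^ 2)) t :=
        (Real.hasDerivAt_sinh t).div ((Real.hasDerivAt_cosh t).add_const 1) hne
      have hnum : Real.cosh t * (Real.cosh t + 1) - Real.sinh t * Real.sinh t
          = Real.cosh t + 1 := by
        linear_combination Real.cosh_sq_sub_sinh_sq t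
      have hq : (Real.cosh t + 1) / ((Real.cosh t + 1) ^ 2) = (Real.cosh t + 1)⁻¹ := by
        rw [sq]
        field_simp
      rw [hnum, hq] at h3
      have h4 : HasDerivAt (fun t => -(E t * (Real.sinh t / (Real.cosh t + 1)))) _ t :=
        (h2.mul h3).neg
      convert h4 using 1
      have hs2 : Real.sinh t * Real.sinh t = (Real.cosh t - 1) * (Real.cosh t + 1) := by
        linear_combination Real.sinh_sq t
      simp only [hf', hE]
      field_simp
      linear_combination (-z) * hs2
    have hf'int : IntegrableOn f' (Ioi 0) := (intD.const_mul z).sub intC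
    have hlim : Tendsto F atTop (nhds 0) := by
      apply squeeze_zero_norm (a := fun t => Real.exp (-z * Real.cosh t))
      · intro t
        rw [hF]
        simp only [norm_neg, Real.norm_eq_abs, abs_mul]
        rw [abs_of_pos (hEpos t)]
        have h1 : |Real.sinh t / (Real.cosh t + 1)| ≤ 1 := by
          rw [abs_div, abs_of_pos (hcpos t), div_le_one (hcpos t)]
          have habs := Real.abs_sinh t
          have h2 : Real.sinh |t| ≤ Real.cosh |t| := by
            have := Real.exp_pos (-|t|)
            rw [Real.sinh_eq, Real.cosh_eq]; linarith
          rw [habs, ← Real.cosh_abs t]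
          linarith
        calc E t * |Real.sinh t / (Real.cosh t + 1)| ≤ E t * 1 :=
              mul_le_mul_of_nonneg_left h1 (hEpos t).le
          _ = Real.exp (-z * Real.cosh t) := by rw [mul_one]
      · have hcosh : Tendsto Real.cosh atTop atTop := by
          apply tendsto_atTop_mono' _ _ tendsto_id
          filter_upwards [eventually_ge_atTop (0:ℝ)] with t ht
          have := cosh_quad_le ht
          simp only [id]
          nlinarith [sq_nonneg (1 - t/2)]
        have h5 : Tendsto (fun t => -z * Real.cosh t) atTop atBot := by
          have h7 := hcosh.const_mul_atTop hz
          have h6 : Tendsto (fun t => -(z * Real.cosh t)) atTop atBot :=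
            tendsto_neg_atTop_atBot.comp h7
          refine h6.congr (fun t => by ring)
        exact Real.tendsto_exp_atBot.comp h5
    have hFTC : ∫ t in Ioi (0:ℝ), f' t = 0 - F 0 :=
      integral_Ioi_of_hasDerivAt_of_tendsto' (fun t _ => hderiv t) hf'int hlim
    have hF0 : F 0 = 0 := by simp [hF]
    rw [hF0, sub_zero] at hFTC
    have hsplit : ∫ t in Ioi (0:ℝ), f' t = z * D - C := by
      rw [hf', hDdef, hCdef, integral_sub (intD.const_mul z) intC, integral_const_mul]
    rw [hsplit] at hFTC
    linarith
  -- Cauchy–Schwarz : B^2 ≤ A * C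
  have hCpos : 0 < C := by rw [← hIBP]; exact mul_pos hz hDpos
  have hCS : B ^ 2 ≤ A * C := by
    set lam := B / C with hlam
    have h0 : 0 ≤ ∫ t in Ioi (0:ℝ),
        (Real.sqrt (Real.cosh t + 1) * Real.exp (-z * Real.cosh t / 2) -
          lam * (Real.exp (-z * Real.cosh t / 2) / Real.sqrt (Real.cosh t + 1))) ^ 2 :=
      setIntegral_nonneg measurableSet_Ioi (fun t _ => sq_nonneg _)
    have hexpand : ∀ t : ℝ,
        (Real.sqrt (Real.cosh t + 1) * Real.exp (-z * Real.cosh t / 2) -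
          lam * (Real.exp (-z * Real.cosh t / 2) / Real.sqrt (Real.cosh t + 1))) ^ 2
        = E t * (Real.cosh t + 1) - 2 * lam * E t +
          lam ^ 2 * (E t * (Real.cosh t + 1)⁻¹) := by
      intro t
      have h1 : 0 < Real.cosh t + 1 := hcpos t
      obtain ⟨s, hs⟩ : ∃ s, Real.sqrt (Real.cosh t + 1) = s := ⟨_, rfl⟩
      have hsq : s ^ 2 = Real.cosh t + 1 := by rw [← hs]; exact Real.sq_sqrt h1.le
      have hsqpos : 0 < s := by rw [← hs]; exact Real.sqrt_pos.mpr h1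
      have hexp2 : Real.exp (-z * Real.cosh t / 2) ^ 2 = E t := by
        rw [hE, sq, ← Real.exp_add]; ring_nf
      rw [hs]
      have h5 : (s * Real.exp (-z * Real.cosh t / 2) -
          lam * (Real.exp (-z * Real.cosh t / 2) / s)) ^ 2
          = Real.exp (-z * Real.cosh t / 2) ^ 2 *
            (s ^ 2 - 2 * lam + lam ^ 2 * (s ^ 2)⁻¹) := by
        have hsne : s ≠ 0 := hsqpos.ne'
        field_simp
        ring
      rw [h5, hexp2, hsq]
      ring
    have hre : (∫ t in Ioi (0:ℝ),
        (Real.sqrt (Real.cosh t + 1) * Real.exp (-z * Real.cosh t / 2) -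
          lam * (Real.exp (-z * Real.cosh t / 2) / Real.sqrt (Real.cosh t + 1))) ^ 2)
        = A - 2 * lam * B + lam ^ 2 * C := by
      rw [show (fun t => (Real.sqrt (Real.cosh t + 1) * Real.exp (-z * Real.cosh t / 2) -
          lam * (Real.exp (-z * Real.cosh t / 2) / Real.sqrt (Real.cosh t + 1))) ^ 2)
          = fun t => E t * (Real.cosh t + 1) - 2 * lam * E t +
            lam ^ 2 * (E t * (Real.cosh t + 1)⁻¹) from funext hexpand]
      have i2 : IntegrableOn (fun t => 2 * lam * E t) (Ioi 0) := by
        have := intB.const_mul (2 * lam)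
        exact this
      have i3 : IntegrableOn (fun t => lam ^ 2 * (E t * (Real.cosh t + 1)⁻¹)) (Ioi 0) := by
        have := intC.const_mul (lam ^ 2)
        exact this
      have i12 : IntegrableOn (fun t => E t * (Real.cosh t + 1) - 2 * lam * E t) (Ioi 0) :=
        intA.sub i2
      rw [integral_add i12 i3, integral_sub intA i2, integral_const_mul,
        integral_const_mul]
    rw [hre] at h0
    have hkey : C * (A - 2 * lam * B + lam ^ 2 * C) = A * C - B ^ 2 := by
      rw [hlam]
      field_simp
      ring
    nlinarith [mul_nonneg hCpos.le h0]
  -- now derive both bounds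
  rw [hbK0, hbK1]
  have hK1B : K1 = B + D := by rw [hDval]; ring
  have hK1pos : 0 < K1 := by rw [hK1B]; linarith
  have h2z : (0:ℝ) < 2 * z := by linarith
  -- upper bound
  have hupper : K1 / B < 1 + 1 / (2 * z) := by
    rw [div_lt_iff₀ hBpos]
    have h1 : 2 * (z * (K1 - B)) < B := by rw [hDval] at hIBP; linarith
    have h3 : K1 - B < B / (2 * z) := by
      rw [lt_div_iff₀ h2z]; nlinarith
    have h4 : (1 + 1 / (2 * z)) * B = B + B / (2 * z) := by
      field_simp
    rw [h4]
    linarith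
  refine ⟨?_, hupper⟩
  -- lower bound
  have hACz : A * C = z * (K1 ^ 2 - B ^ 2) := by
    rw [hAval, ← hIBP, hDval]; ring
  have hBK : B ^ 2 ≤ z * (K1 ^ 2 - B ^ 2) := by rw [← hACz]; exact hCS
  set k := K1 / B with hk
  have hkpos : 0 < k := div_pos hK1pos hBpos
  have hq : z + 1 ≤ z * k ^ 2 := by
    have hB2 : (0:ℝ) < B ^ 2 := by positivity
    have hk2 : k ^ 2 = K1 ^ 2 / B ^ 2 := by rw [hk, div_pow]
    rw [hk2, ← mul_div_assoc, le_div_iff₀ hB2]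
    nlinarith
  have hk1 : 1 < k := by
    by_contra hcon
    push_neg at hcon
    have hA1 : k ^ 2 ≤ 1 := by nlinarith
    have hA2 : z * k ^ 2 ≤ z := by nlinarith
    linarith
  have hkup' : 2 * z * k < 2 * z + 1 := by
    have h6 := mul_lt_mul_of_pos_right hupper h2z
    have h7 : (1 + 1 / (2 * z)) * (2 * z) = 2 * z + 1 := by
      field_simp
    rw [hk]
    nlinarith [h6, h7]
  have hP : 0 < (k * (z + 1) - 1) ^ 2 - (z ^ 2 + z + 1) := by
    nlinarith [hq, hkup', hz, hk1]
  have hpos : 0 < k * (z + 1) - 1 := by nlinarith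
  have hsq : Real.sqrt (z ^ 2 + z + 1) < k * (z + 1) - 1 := by
    rw [Real.sqrt_lt' hpos]
    nlinarith
  rw [div_lt_iff₀ (by linarith : (0:ℝ) < z + 1)]
  rw [hk] at hsq
  linarith
end

section
/- For every real z with 0 < z < 1, the modified Bessel function of the second kind of order one satisfies z·K₁(z) ≥ 1 − z²·(1 + |log z|). -/
open Real MeasureTheory Set Filter Topology

lemma bk_scalar (u : ℝ) (hu : 0 ≤ u) :
    (2*u+1) * Real.exp (-u) ≤ 3 * Real.exp (-(u/2)) := by
  have h1 : 1 + u/4 ≤ Real.exp (u/4) := by linarith [Real.add_one_le_exp (u/4)]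
  have h2 : Real.exp (u/4) * Real.exp (u/4) = Real.exp (u/2) := by
    rw [← Real.exp_add]; ring_nf
  have h2' : (1 + u/4)^2 ≤ Real.exp (u/2) := by
    rw [← h2]; nlinarith [Real.exp_pos (u/4)]
  have h3 : 2*u + 1 ≤ 3 * Real.exp (u/2) := by nlinarith [sq_nonneg (u - 4/3)]
  have h6 : Real.exp (u/2) * Real.exp (-u) = Real.exp (-(u/2)) := by
    rw [← Real.exp_add]; ring_nf
  calc (2*u+1) * Real.exp (-u) ≤ 3 * Real.exp (u/2) * Real.exp (-u) :=
        mul_le_mul_of_nonneg_right h3 (Real.exp_pos _).le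
    _ = 3 * Real.exp (-(u/2)) := by rw [mul_assoc, h6]

-- domination of B by an integrable exponential, for t > 0
lemma bk_dom {z : ℝ} (h0 : 0 < z) (h1 : z < 1) {t : ℝ} (ht : 0 < t) :
    Real.cosh t * Real.exp (-(z * Real.sinh t)) ≤ (3/z) * Real.exp (-(z/2) * t) := by
  have hts : t < Real.sinh t := Real.self_lt_sinh_iff.2 ht
  have hs : 0 < Real.sinh t := ht.trans hts
  have hcs : Real.cosh t ≤ 2 * Real.sinh t + 1 := by
    rw [Real.cosh_eq, Real.sinh_eq]
    have he1 : (1:ℝ) ≤ Real.exp t := Real.one_le_exp ht.le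
    have he2 : Real.exp (-t) ≤ 1 := Real.exp_le_one_iff.2 (by linarith)
    nlinarith [Real.exp_pos (-t)]
  set u := z * Real.sinh t with hu
  have hu0 : 0 ≤ u := by positivity
  have step1 : Real.cosh t * Real.exp (-u) ≤ (1/z) * ((2*u+1) * Real.exp (-u)) := by
    rw [← mul_assoc]
    apply mul_le_mul_of_nonneg_right _ (Real.exp_pos _).le
    have : Real.cosh t * z ≤ 2*u + 1 := by
      have : Real.cosh t * z ≤ (2 * Real.sinh t + 1) * z :=
        mul_le_mul_of_nonneg_right hcs h0.le
      nlinarith [hcs, Real.cosh_pos t]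
    calc Real.cosh t = (Real.cosh t * z) / z := by field_simp
      _ ≤ (2*u+1)/z := by gcongr
      _ = (1/z) * (2*u+1) := by ring
  have step2 : (1/z) * ((2*u+1) * Real.exp (-u)) ≤ (1/z) * (3 * Real.exp (-(u/2))) :=
    mul_le_mul_of_nonneg_left (bk_scalar u hu0) (by positivity)
  have step3 : Real.exp (-(u/2)) ≤ Real.exp (-(z/2) * t) := by
    apply Real.exp_le_exp.2
    rw [hu]; nlinarith
  calc Real.cosh t * Real.exp (-u) ≤ (1/z) * (3 * Real.exp (-(u/2))) := step1.trans step2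
    _ ≤ (1/z) * (3 * Real.exp (-(z/2)*t)) := by
        apply mul_le_mul_of_nonneg_left _ (by positivity)
        exact mul_le_mul_of_nonneg_left step3 (by norm_num)
    _ = (3/z) * Real.exp (-(z/2)*t) := by ring

lemma bk_int_B {z : ℝ} (h0 : 0 < z) (h1 : z < 1) :
    IntegrableOn (fun t => Real.cosh t * Real.exp (-(z * Real.sinh t))) (Ioi 0) := by
  apply Integrable.mono' ((exp_neg_integrableOn_Ioi 0 (by positivity : (0:ℝ) < z/2)).const_mul (3/z))
  · exact (Real.continuous_cosh.mul (Real.continuous_exp.comp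
      ((continuous_const.mul Real.continuous_sinh).neg))).aestronglyMeasurable
  · filter_upwards [ae_restrict_mem measurableSet_Ioi] with t ht
    rw [Real.norm_eq_abs, abs_of_nonneg (by positivity)]
    exact bk_dom h0 h1 ht

lemma bk_int_K {z : ℝ} (h0 : 0 < z) (h1 : z < 1) :
    IntegrableOn (fun t => Real.exp (-z * Real.cosh t) * Real.cosh t) (Ioi 0) := by
  apply Integrable.mono' (bk_int_B h0 h1)
  · exact ((Real.continuous_exp.comp
      ((continuous_const.mul Real.continuous_cosh))).mul Real.continuous_cosh).aestronglyMeasurable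
  · filter_upwards [ae_restrict_mem measurableSet_Ioi] with t ht
    rw [Real.norm_eq_abs, abs_of_nonneg (by positivity)]
    rw [mul_comm]
    apply mul_le_mul_of_nonneg_left _ (Real.cosh_pos t).le
    apply Real.exp_le_exp.2
    nlinarith [Real.sinh_lt_cosh (x := t)]

lemma bk_int_J {z : ℝ} (h0 : 0 < z) (h1 : z < 1) :
    IntegrableOn (fun t => Real.exp (-t) * Real.exp (-(z * Real.sinh t))) (Ioi 0) := by
  apply Integrable.mono' (exp_neg_integrableOn_Ioi 0 one_pos)
  · exact ((Real.continuous_exp.comp continuous_neg).mul (Real.continuous_exp.comp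
      ((continuous_const.mul Real.continuous_sinh).neg))).aestronglyMeasurable
  · filter_upwards [ae_restrict_mem measurableSet_Ioi] with t ht
    rw [Real.norm_eq_abs, abs_of_nonneg (by positivity), neg_one_mul]
    have hs : 0 < Real.sinh t := (Real.self_lt_sinh_iff.2 ht).trans_le' ht.le |>.trans_le le_rfl
    nlinarith [Real.exp_le_one_iff.2 (by nlinarith : -(z*Real.sinh t) ≤ 0), Real.exp_pos (-t)]

lemma bk_int_C {z : ℝ} (h0 : 0 < z) (h1 : z < 1) :
    IntegrableOn (fun t => Real.exp (-t) * (Real.cosh t * Real.exp (-(z * Real.sinh t)))) (Ioi 0) := by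
  apply Integrable.mono' (bk_int_B h0 h1)
  · exact ((Real.continuous_exp.comp continuous_neg).mul (Real.continuous_cosh.mul
      (Real.continuous_exp.comp ((continuous_const.mul Real.continuous_sinh).neg)))).aestronglyMeasurable
  · filter_upwards [ae_restrict_mem measurableSet_Ioi] with t ht
    rw [Real.norm_eq_abs, abs_of_nonneg (by positivity)]
    have he : Real.exp (-t) ≤ 1 := Real.exp_le_one_iff.2 (by simp [le_of_lt (show (0:ℝ) < t from ht)])
    nlinarith [Real.cosh_pos t, Real.exp_pos (-(z*Real.sinh t)), mul_pos (Real.cosh_pos t) (Real.exp_pos (-(z*Real.sinh t)))]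

lemma bk_sinh_atTop : Tendsto Real.sinh atTop atTop := by
  apply tendsto_atTop_mono' atTop _ tendsto_id
  filter_upwards [eventually_gt_atTop 0] with t ht
  exact (Real.self_lt_sinh_iff.2 ht).le

lemma bk_exp_sinh_tendsto {z : ℝ} (h0 : 0 < z) :
    Tendsto (fun t => Real.exp (-(z * Real.sinh t))) atTop (𝓝 0) := by
  apply Real.tendsto_exp_atBot.comp
  exact tendsto_neg_atTop_atBot.comp (bk_sinh_atTop.const_mul_atTop h0)

lemma bk_ftc1 {z : ℝ} (h0 : 0 < z) (h1 : z < 1) :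
    ∫ t in Ioi (0:ℝ), z * (Real.cosh t * Real.exp (-(z * Real.sinh t))) = 1 := by
  have hderiv : ∀ x ∈ Ici (0:ℝ), HasDerivAt (fun t => -Real.exp (-(z * Real.sinh t)))
      (z * (Real.cosh x * Real.exp (-(z * Real.sinh x)))) x := by
    intro x _
    have h : HasDerivAt (fun t => -(z * Real.sinh t)) (-(z * Real.cosh x)) x := by
      exact ((Real.hasDerivAt_sinh x).const_mul z).neg
    have this : HasDerivAt (fun t => -Real.exp (-(z * Real.sinh t)))
        (-(Real.exp (-(z * Real.sinh x)) * -(z * Real.cosh x))) x := h.exp.neg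
    convert this using 1
    ring
  have htend : Tendsto (fun t => -Real.exp (-(z * Real.sinh t))) atTop (𝓝 0) := by
    simpa using (bk_exp_sinh_tendsto h0).neg
  have := integral_Ioi_of_hasDerivAt_of_tendsto' hderiv
    ((bk_int_B h0 h1).const_mul z) htend
  simp only [Real.sinh_zero, mul_zero, neg_zero, Real.exp_zero] at this
  rw [this]; ring

lemma bk_ftc2 {z : ℝ} (h0 : 0 < z) (h1 : z < 1) :
    ∫ t in Ioi (0:ℝ), ((1/z) * (Real.exp (-t) * Real.exp (-(z * Real.sinh t)))
      + Real.exp (-t) * (Real.cosh t * Real.exp (-(z * Real.sinh t)))) = 1/z := by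
  have hderiv : ∀ x ∈ Ici (0:ℝ), HasDerivAt
      (fun t => -(1/z) * (Real.exp (-t) * Real.exp (-(z * Real.sinh t))))
      ((1/z) * (Real.exp (-x) * Real.exp (-(z * Real.sinh x)))
        + Real.exp (-x) * (Real.cosh x * Real.exp (-(z * Real.sinh x)))) x := by
    intro x _
    have hneg : HasDerivAt (fun t : ℝ => -t) (-1) x := (hasDerivAt_id x).neg
    have ha : HasDerivAt (fun t : ℝ => Real.exp (-t)) (Real.exp (-x) * (-1)) x := hneg.exp
    have hi : HasDerivAt (fun t => -(z * Real.sinh t)) (-(z * Real.cosh x)) x := by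
      exact ((Real.hasDerivAt_sinh x).const_mul z).neg
    have hb := hi.exp
    have this : HasDerivAt (fun t => -(1/z) * (Real.exp (-t) * Real.exp (-(z * Real.sinh t))))
        (-(1/z) * (Real.exp (-x) * (-1) * Real.exp (-(z * Real.sinh x))
          + Real.exp (-x) * (Real.exp (-(z * Real.sinh x)) * -(z * Real.cosh x)))) x :=
      (ha.mul hb).const_mul (-(1/z))
    convert this using 1
    field_simp
    ring
  have htend : Tendsto (fun t => -(1/z) * (Real.exp (-t) * Real.exp (-(z * Real.sinh t))))
      atTop (𝓝 0) := by
    have h2 : Tendsto (fun t : ℝ => Real.exp (-t)) atTop (𝓝 0) :=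
      Real.tendsto_exp_atBot.comp tendsto_neg_atTop_atBot
    have h3 : Tendsto (fun t => Real.exp (-(z * Real.sinh t))) atTop (𝓝 0) := by
      apply Real.tendsto_exp_atBot.comp
      apply tendsto_neg_atTop_atBot.comp
      apply Filter.Tendsto.const_mul_atTop h0
      apply tendsto_atTop_mono' atTop _ tendsto_id
      filter_upwards [eventually_gt_atTop 0] with t ht
      exact (Real.self_lt_sinh_iff.2 ht).le
    have := (h2.mul h3).const_mul (-(1/z))
    simpa using this
  have hint : IntegrableOn (fun t => ((1/z) * (Real.exp (-t) * Real.exp (-(z * Real.sinh t)))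
      + Real.exp (-t) * (Real.cosh t * Real.exp (-(z * Real.sinh t))))) (Ioi 0) :=
    ((bk_int_J h0 h1).const_mul (1/z)).add (bk_int_C h0 h1)
  have := integral_Ioi_of_hasDerivAt_of_tendsto' hderiv hint htend
  simp only [Real.sinh_zero, mul_zero, neg_zero, Real.exp_zero, mul_one] at this
  rw [this]; ring

lemma bk_J_lb {z : ℝ} (h0 : 0 < z) (h1 : z < 1) :
    1 - z/2 - (z/2) * (Real.log 2 - Real.log z)
      ≤ ∫ t in Ioi (0:ℝ), Real.exp (-t) * Real.exp (-(z * Real.sinh t)) := by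
  set L := Real.log 2 - Real.log z with hLdef
  have hL : 0 < L := by
    have := Real.log_neg h0 h1
    have := Real.log_pos (by norm_num : (1:ℝ) < 2)
    linarith
  have step1 : ∫ t in Ioc (0:ℝ) L, (Real.exp (-t) - z/2)
      ≤ ∫ t in Ioc (0:ℝ) L, Real.exp (-t) * Real.exp (-(z * Real.sinh t)) := by
    apply setIntegral_mono_on
    · exact ((Real.continuous_exp.comp continuous_neg).sub continuous_const).integrableOn_Ioc
    · exact (bk_int_J h0 h1).mono_set Ioc_subset_Ioi_self
    · exact measurableSet_Ioc
    · intro t ht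
      have ht0 : 0 < t := ht.1
      have hs : 0 < Real.sinh t := ht0.trans (Real.self_lt_sinh_iff.2 ht0)
      have hm : Real.exp (-t) * Real.exp t = 1 := by rw [← Real.exp_add]; simp
      have h2 : Real.exp (-t) * Real.sinh t ≤ 1/2 := by
        rw [Real.sinh_eq]
        nlinarith [Real.exp_pos (-t), sq_nonneg (Real.exp (-t))]
      have h1' : 1 - z * Real.sinh t ≤ Real.exp (-(z * Real.sinh t)) := by
        linarith [Real.add_one_le_exp (-(z * Real.sinh t))]
      nlinarith [mul_le_mul_of_nonneg_left h1' (Real.exp_pos (-t)).le, Real.exp_pos (-t)]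
  have step2 : ∫ t in Ioc (0:ℝ) L, Real.exp (-t) * Real.exp (-(z * Real.sinh t))
      ≤ ∫ t in Ioi (0:ℝ), Real.exp (-t) * Real.exp (-(z * Real.sinh t)) := by
    apply setIntegral_mono_set (bk_int_J h0 h1)
    · filter_upwards with t using by positivity
    · exact (Ioc_subset_Ioi_self).eventuallyLE
  have step3 : ∫ t in Ioc (0:ℝ) L, (Real.exp (-t) - z/2) = 1 - z/2 - (z/2)*L := by
    rw [← intervalIntegral.integral_of_le hL.le]
    rw [intervalIntegral.integral_sub
      ((by fun_prop : Continuous fun t : ℝ => Real.exp (-t)).intervalIntegrable _ _)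
      intervalIntegrable_const]
    have he : (∫ t in (0:ℝ)..L, Real.exp (-t)) = 1 - Real.exp (-L) := by
      rw [intervalIntegral.integral_comp_neg (fun t => Real.exp t)]
      rw [integral_exp]
      simp
    have hz2 : Real.exp (-L) = z/2 := by
      rw [show -L = Real.log z - Real.log 2 by rw [hLdef]; ring, Real.exp_sub,
        Real.exp_log h0, Real.exp_log (by norm_num : (0:ℝ) < 2)]
    rw [he, hz2, intervalIntegral.integral_const]
    simp
    ring
  linarith


open Real

theorem besselK1_lower_bound (z : ℝ) (h0 : 0 < z) (h1 : z < 1) :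
    z * besselK 1 z ≥ 1 - z ^ 2 * (1 + |Real.log z|) := by
  have hlogz : Real.log z < 0 := Real.log_neg h0 h1
  have hlog : |Real.log z| = -Real.log z := abs_of_neg hlogz
  set IJ := ∫ t in Ioi (0:ℝ), Real.exp (-t) * Real.exp (-(z * Real.sinh t)) with hIJ
  set IC := ∫ t in Ioi (0:ℝ), Real.exp (-t) * (Real.cosh t * Real.exp (-(z * Real.sinh t)))
    with hIC
  -- besselK as integral
  have hK : z * besselK 1 z = ∫ t in Ioi (0:ℝ), z * (Real.exp (-z * Real.cosh t) * Real.cosh t) := by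
    rw [besselK]
    simp only [Nat.cast_one, one_mul]
    rw [integral_const_mul]
  -- pointwise bound
  have hmono : ∫ t in Ioi (0:ℝ),
      (z * (Real.cosh t * Real.exp (-(z * Real.sinh t)))
        - z^2 * (Real.exp (-t) * (Real.cosh t * Real.exp (-(z * Real.sinh t)))))
      ≤ ∫ t in Ioi (0:ℝ), z * (Real.exp (-z * Real.cosh t) * Real.cosh t) := by
    apply setIntegral_mono_on
    · exact ((bk_int_B h0 h1).const_mul z).sub ((bk_int_C h0 h1).const_mul (z^2))
    · exact (bk_int_K h0 h1).const_mul z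
    · exact measurableSet_Ioi
    · intro t ht
      have hsplit : Real.exp (-z * Real.cosh t)
          = Real.exp (-(z * Real.sinh t)) * Real.exp (-(z * Real.exp (-t))) := by
        rw [← Real.exp_add]; congr 1
        rw [Real.cosh_eq, Real.sinh_eq]; ring
      have h1' : 1 - z * Real.exp (-t) ≤ Real.exp (-(z * Real.exp (-t))) := by
        linarith [Real.add_one_le_exp (-(z * Real.exp (-t)))]
      rw [hsplit]
      nlinarith [mul_le_mul_of_nonneg_left h1'
        (by positivity : (0:ℝ) ≤ z * (Real.cosh t * Real.exp (-(z * Real.sinh t)))),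
        Real.exp_pos (-t), Real.cosh_pos t, Real.exp_pos (-(z * Real.sinh t))]
  -- value of lhs integral
  have hsub : ∫ t in Ioi (0:ℝ),
      (z * (Real.cosh t * Real.exp (-(z * Real.sinh t)))
        - z^2 * (Real.exp (-t) * (Real.cosh t * Real.exp (-(z * Real.sinh t)))))
      = 1 - z^2 * IC := by
    rw [integral_sub ((bk_int_B h0 h1).const_mul z) ((bk_int_C h0 h1).const_mul (z^2))]
    rw [bk_ftc1 h0 h1, integral_const_mul]
  -- IC in terms of IJ
  have hICeq : (1/z) * IJ + IC = 1/z := by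
    have := bk_ftc2 h0 h1
    rwa [integral_add ((bk_int_J h0 h1).const_mul (1/z)) (bk_int_C h0 h1),
      integral_const_mul] at this
  have hJ : 1 - z/2 - (z/2) * (Real.log 2 - Real.log z) ≤ IJ := bk_J_lb h0 h1
  have hlog2 : Real.log 2 < 1 := by
    have := Real.log_lt_sub_one_of_pos (by norm_num : (0:ℝ) < 2) (by norm_num)
    linarith
  have hICle : IC ≤ 1 - Real.log z := by
    have hz : z * IC = 1 - IJ := by
      have := hICeq
      field_simp at this
      linarith
    have : z * IC ≤ z * (1 - Real.log z) := by
      rw [hz]; nlinarith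
    exact le_of_mul_le_mul_left (by linarith) h0
  have final : 1 - z^2 * IC ≥ 1 - z^2 * (1 + |Real.log z|) := by
    rw [hlog]
    have : z^2 * IC ≤ z^2 * (1 - Real.log z) :=
      mul_le_mul_of_nonneg_left hICle (by positivity)
    linarith
  rw [ge_iff_le, hK]
  calc 1 - z ^ 2 * (1 + |Real.log z|) ≤ 1 - z^2 * IC := final
    _ = _ := hsub.symm
    _ ≤ _ := hmono
end

section
/- For every real ε > 0 and every positive integer k, the quantity λ = 2π²εk·K₁(πεk)/K₀(πεk) satisfies the growth bounds 2π²εk ≤ 2π²εk·(√((πεk)² + πεk + 1) + 1)/(πεk + 1) ≤ λ ≤ 2π²εk + π. -/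
open Real

open MeasureTheory Set Filter

/-- Pointwise exponential domination for the master integrand. -/
lemma besselK_master_bound {z : ℝ} (hz : 0 < z) {t : ℝ} (ht : 0 ≤ t) :
    Real.exp (-z * Real.cosh t) * (1 + Real.cosh t) ≤ 108 / z ^ 3 * Real.exp (-1 * t) := by
  have hy : 1 ≤ Real.cosh t := Real.one_le_cosh t
  have het : Real.exp t ≤ 2 * Real.cosh t := by
    rw [Real.cosh_eq]; have := Real.exp_pos (-t); linarith
  have hz3 : (0 : ℝ) < z ^ 3 := by positivity
  -- cube bound : z^3 y^3 / 27 ≤ exp (z y)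
  have hcube : z ^ 3 * Real.cosh t ^ 3 / 27 ≤ Real.exp (z * Real.cosh t) := by
    have h1 : z * Real.cosh t / 3 + 1 ≤ Real.exp (z * Real.cosh t / 3) :=
      Real.add_one_le_exp _
    have h2 : Real.exp (z * Real.cosh t) = Real.exp (z * Real.cosh t / 3) ^ 3 := by
      rw [← Real.exp_nat_mul]; norm_num; ring_nf
    have h3 : (0:ℝ) ≤ z * Real.cosh t / 3 := by positivity
    have h4 : (z * Real.cosh t / 3) ^ 3 ≤ (z * Real.cosh t / 3 + 1) ^ 3 := by
      apply pow_le_pow_left₀ h3 (by linarith)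
    have h5 : (z * Real.cosh t / 3 + 1) ^ 3 ≤ Real.exp (z * Real.cosh t / 3) ^ 3 :=
      pow_le_pow_left₀ (by linarith) h1 3
    calc z ^ 3 * Real.cosh t ^ 3 / 27 = (z * Real.cosh t / 3) ^ 3 := by ring
      _ ≤ (z * Real.cosh t / 3 + 1) ^ 3 := h4
      _ ≤ Real.exp (z * Real.cosh t / 3) ^ 3 := h5
      _ = Real.exp (z * Real.cosh t) := h2.symm
  have key : (1 + Real.cosh t) * Real.exp t * z ^ 3 ≤ 108 * Real.exp (z * Real.cosh t) := by
    have k1 : (1 + Real.cosh t) * Real.exp t ≤ (2 * Real.cosh t) * (2 * Real.cosh t) :=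
      mul_le_mul (by linarith) het (Real.exp_pos t).le (by linarith)
    have k2 : Real.cosh t ^ 2 ≤ Real.cosh t ^ 3 := by nlinarith
    have k3 : (1 + Real.cosh t) * Real.exp t * z ^ 3 ≤ 4 * Real.cosh t ^ 2 * z ^ 3 := by
      nlinarith [k1, hz3]
    have k4 : 4 * Real.cosh t ^ 2 * z ^ 3 ≤ 4 * Real.cosh t ^ 3 * z ^ 3 := by
      nlinarith [k2, hz3]
    linarith [hcube]
  have hid : Real.exp (-z * Real.cosh t) * (1 + Real.cosh t) =
      ((1 + Real.cosh t) * Real.exp t * z ^ 3) *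
        (Real.exp (-z * Real.cosh t) * Real.exp (-t) / z ^ 3) := by
    rw [Real.exp_neg t]
    field_simp [Real.exp_ne_zero]
  rw [hid]
  have hpos : 0 ≤ Real.exp (-z * Real.cosh t) * Real.exp (-t) / z ^ 3 := by positivity
  calc ((1 + Real.cosh t) * Real.exp t * z ^ 3) *
        (Real.exp (-z * Real.cosh t) * Real.exp (-t) / z ^ 3)
      ≤ (108 * Real.exp (z * Real.cosh t)) *
        (Real.exp (-z * Real.cosh t) * Real.exp (-t) / z ^ 3) :=
        mul_le_mul_of_nonneg_right key hpos
    _ = 108 / z ^ 3 * Real.exp (-1 * t) := by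
        rw [neg_mul, Real.exp_neg, neg_mul, one_mul, Real.exp_neg]
        field_simp [Real.exp_ne_zero]

lemma besselK_integrable_master {z : ℝ} (hz : 0 < z) :
    IntegrableOn (fun t => Real.exp (-z * Real.cosh t) * (1 + Real.cosh t)) (Ioi (0:ℝ)) := by
  have hg : IntegrableOn (fun t : ℝ => 108 / z ^ 3 * Real.exp (-1 * t)) (Ioi (0:ℝ)) :=
    (exp_neg_integrableOn_Ioi 0 one_pos).const_mul _
  apply MeasureTheory.Integrable.mono hg
  · exact (((Real.continuous_exp.comp (continuous_const.mul Real.continuous_cosh)).mul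
      (continuous_const.add Real.continuous_cosh))).aestronglyMeasurable
  · rw [ae_restrict_iff' measurableSet_Ioi]
    filter_upwards with t ht
    have h1 : (0:ℝ) ≤ Real.exp (-z * Real.cosh t) * (1 + Real.cosh t) := by
      have := Real.one_le_cosh t; positivity
    have h2 : (0:ℝ) ≤ 108 / z ^ 3 * Real.exp (-1 * t) := by positivity
    rw [Real.norm_eq_abs, Real.norm_eq_abs, abs_of_nonneg h1, abs_of_nonneg h2]
    exact besselK_master_bound hz (le_of_lt ht)

lemma besselK_integrable_aux {z : ℝ} (hz : 0 < z) {f : ℝ → ℝ} (hc : Continuous f)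
    (hle : ∀ t, t ∈ Ioi (0:ℝ) → |f t| ≤ Real.exp (-z * Real.cosh t) * (1 + Real.cosh t)) :
    IntegrableOn f (Ioi (0:ℝ)) := by
  apply MeasureTheory.Integrable.mono (besselK_integrable_master hz) hc.aestronglyMeasurable
  rw [ae_restrict_iff' measurableSet_Ioi]
  filter_upwards with t ht
  have h1 : (0:ℝ) ≤ Real.exp (-z * Real.cosh t) * (1 + Real.cosh t) := by
    have := Real.one_le_cosh t; positivity
  rw [Real.norm_eq_abs, Real.norm_eq_abs, abs_of_nonneg h1]
  exact hle t ht

lemma besselK_cont_w {z : ℝ} : Continuous (fun t => Real.exp (-z * Real.cosh t)) :=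
  Real.continuous_exp.comp (continuous_const.mul Real.continuous_cosh)

lemma besselK_int_w {z : ℝ} (hz : 0 < z) :
    IntegrableOn (fun t => Real.exp (-z * Real.cosh t)) (Ioi (0:ℝ)) := by
  apply besselK_integrable_aux hz besselK_cont_w
  intro t _
  have hc := Real.one_le_cosh t
  have hw := Real.exp_pos (-z * Real.cosh t)
  rw [abs_of_nonneg hw.le]
  nlinarith

lemma besselK_int_wcosh {z : ℝ} (hz : 0 < z) :
    IntegrableOn (fun t => Real.exp (-z * Real.cosh t) * Real.cosh t) (Ioi (0:ℝ)) := by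
  apply besselK_integrable_aux hz (besselK_cont_w.mul Real.continuous_cosh)
  intro t _
  show |Real.exp (-z * Real.cosh t) * Real.cosh t| ≤ _
  have hc := Real.one_le_cosh t
  have hw := Real.exp_pos (-z * Real.cosh t)
  rw [abs_of_nonneg (by positivity)]
  nlinarith

lemma besselK_int_w1c {z : ℝ} (hz : 0 < z) :
    IntegrableOn (fun t => Real.exp (-z * Real.cosh t) * (Real.cosh t + 1)) (Ioi (0:ℝ)) := by
  apply besselK_integrable_aux hz (besselK_cont_w.mul (Real.continuous_cosh.add continuous_const))
  intro t _
  show |Real.exp (-z * Real.cosh t) * (Real.cosh t + 1)| ≤ _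
  have hc := Real.one_le_cosh t
  have hw := Real.exp_pos (-z * Real.cosh t)
  rw [abs_of_nonneg (by positivity)]
  nlinarith

lemma besselK_cosh_add_one_ne (t : ℝ) : Real.cosh t + 1 ≠ 0 := by
  have := Real.one_le_cosh t; positivity

lemma besselK_int_wdiv {z : ℝ} (hz : 0 < z) :
    IntegrableOn (fun t => Real.exp (-z * Real.cosh t) / (Real.cosh t + 1)) (Ioi (0:ℝ)) := by
  refine besselK_integrable_aux hz ?_ ?_
  · exact besselK_cont_w.div (Real.continuous_cosh.add continuous_const) besselK_cosh_add_one_ne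
  intro t _
  have hc := Real.one_le_cosh t
  have hw := Real.exp_pos (-z * Real.cosh t)
  have h2 : (0:ℝ) < Real.cosh t + 1 := by linarith
  rw [abs_of_nonneg (by positivity), div_le_iff₀ h2]
  have h4 : (4:ℝ) ≤ (1 + Real.cosh t) * (Real.cosh t + 1) := by nlinarith
  nlinarith [mul_le_mul_of_nonneg_left h4 hw.le]

lemma besselK_ibp {z : ℝ} (hz : 0 < z) :
    z * (∫ t in Ioi (0:ℝ), Real.exp (-z * Real.cosh t) * Real.cosh t) -
      z * (∫ t in Ioi (0:ℝ), Real.exp (-z * Real.cosh t)) =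
      ∫ t in Ioi (0:ℝ), Real.exp (-z * Real.cosh t) / (Real.cosh t + 1) := by
  set f : ℝ → ℝ := fun t => -(Real.exp (-z * Real.cosh t) * (Real.sinh t / (Real.cosh t + 1)))
    with hf
  set F : ℝ → ℝ := fun x =>
      Real.exp (-z * Real.cosh x) * (z * (Real.cosh x - 1) - 1 / (Real.cosh x + 1)) with hF
  have hFeq : F = fun t => (z * (Real.exp (-z * Real.cosh t) * Real.cosh t) -
      z * Real.exp (-z * Real.cosh t)) - Real.exp (-z * Real.cosh t) / (Real.cosh t + 1) := by
    funext t
    have hne := besselK_cosh_add_one_ne t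
    rw [hF]
    field_simp
  have hderiv : ∀ x ∈ Ioi (0:ℝ), HasDerivAt f (F x) x := by
    intro x _
    have hne := besselK_cosh_add_one_ne x
    have h1 : HasDerivAt (fun t => -z * Real.cosh t) (-z * Real.sinh x) x :=
      (Real.hasDerivAt_cosh x).const_mul (-z)
    have h2 := h1.exp
    have h3 : HasDerivAt (fun t => Real.sinh t / (Real.cosh t + 1))
        ((Real.cosh x * (Real.cosh x + 1) - Real.sinh x * Real.sinh x) / (Real.cosh x + 1) ^ 2)
        x := (Real.hasDerivAt_sinh x).div ((Real.hasDerivAt_cosh x).add_const 1) hne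
    have h4 : HasDerivAt f _ x := (h2.mul h3).neg
    convert h4 using 1
    have hs : Real.sinh x * Real.sinh x = Real.cosh x ^ 2 - 1 := by
      have := Real.cosh_sq x; nlinarith
    rw [hF]
    have h6 : Real.sinh x * Real.sinh x / (Real.cosh x + 1) = Real.cosh x - 1 := by
      rw [hs, div_eq_iff hne]; ring
    have h7 : (Real.cosh x * (Real.cosh x + 1) - Real.sinh x * Real.sinh x) /
        (Real.cosh x + 1) ^ 2 = 1 / (Real.cosh x + 1) := by
      rw [hs, div_eq_div_iff (by positivity) hne]; ring
    rw [h7]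
    rw [show Real.exp (-z * Real.cosh x) * (-z * Real.sinh x) * (Real.sinh x / (Real.cosh x + 1))
        = -z * Real.exp (-z * Real.cosh x) * (Real.sinh x * Real.sinh x / (Real.cosh x + 1))
        from by ring, h6]
    ring
  have hFint : IntegrableOn F (Ioi (0:ℝ)) := by
    rw [hFeq]
    exact (((besselK_int_wcosh hz).const_mul z).sub ((besselK_int_w hz).const_mul z)).sub
      (besselK_int_wdiv hz)
  have hcont : ContinuousWithinAt f (Ici (0:ℝ)) 0 := by
    apply Continuous.continuousWithinAt
    exact (besselK_cont_w.mul (Real.continuous_sinh.div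
      (Real.continuous_cosh.add continuous_const) besselK_cosh_add_one_ne)).neg
  have hcosh_top : Tendsto Real.cosh atTop atTop := by
    apply tendsto_atTop_mono _ (Real.tendsto_exp_atTop.atTop_div_const two_pos)
    intro t
    rw [Real.cosh_eq]
    have := Real.exp_pos (-t)
    linarith
  have htend : Tendsto f atTop (nhds 0) := by
    have h6 : Tendsto (fun t => Real.exp (-z * Real.cosh t)) atTop (nhds 0) :=
      Real.tendsto_exp_atBot.comp (hcosh_top.const_mul_atTop_of_neg (by linarith))
    apply squeeze_zero_norm _ h6
    intro t
    have hc := Real.one_le_cosh t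
    have hsc : |Real.sinh t| ≤ Real.cosh t := by
      have h := Real.cosh_sq t
      rw [abs_le]
      constructor <;> nlinarith
    have hw := Real.exp_pos (-z * Real.cosh t)
    rw [hf, norm_neg, Real.norm_eq_abs, abs_mul, abs_of_nonneg hw.le, abs_div,
      abs_of_nonneg (by linarith : (0:ℝ) ≤ Real.cosh t + 1)]
    calc Real.exp (-z * Real.cosh t) * (|Real.sinh t| / (Real.cosh t + 1))
        ≤ Real.exp (-z * Real.cosh t) * 1 := by
          apply mul_le_mul_of_nonneg_left _ hw.le
          rw [div_le_one (by linarith)]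
          linarith
      _ = Real.exp (-z * Real.cosh t) := mul_one _
  have key := integral_Ioi_of_hasDerivAt_of_tendsto hcont hderiv hFint htend
  have hf0 : f 0 = 0 := by simp [hf]
  rw [hf0, sub_zero] at key
  have hA : Integrable (fun t => z * (Real.exp (-z * Real.cosh t) * Real.cosh t) -
      z * Real.exp (-z * Real.cosh t)) (volume.restrict (Ioi (0:ℝ))) :=
    ((besselK_int_wcosh hz).const_mul z).sub ((besselK_int_w hz).const_mul z)
  have hsplit : ∫ x in Ioi (0:ℝ), F x =
      (z * (∫ t in Ioi (0:ℝ), Real.exp (-z * Real.cosh t) * Real.cosh t) -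
        z * (∫ t in Ioi (0:ℝ), Real.exp (-z * Real.cosh t))) -
        ∫ t in Ioi (0:ℝ), Real.exp (-z * Real.cosh t) / (Real.cosh t + 1) := by
    rw [hFeq]
    rw [integral_sub hA (besselK_int_wdiv hz),
      integral_sub ((besselK_int_wcosh hz).const_mul z) ((besselK_int_w hz).const_mul z),
      integral_const_mul, integral_const_mul]
  rw [key] at hsplit
  linarith [hsplit]

lemma besselK_w_pos {z : ℝ} (hz : 0 < z) :
    0 < ∫ t in Ioi (0:ℝ), Real.exp (-z * Real.cosh t) := by
  rw [setIntegral_pos_iff_support_of_nonneg_ae _ (besselK_int_w hz)]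
  · have hsupp : Function.support (fun t => Real.exp (-z * Real.cosh t)) = univ := by
      ext t; simp [Function.mem_support, Real.exp_ne_zero]
    rw [hsupp, univ_inter, Real.volume_Ioi]
    exact ENNReal.zero_lt_top
  · filter_upwards with t
    exact (Real.exp_pos _).le

lemma besselK_K0_le_K1 {z : ℝ} (hz : 0 < z) :
    (∫ t in Ioi (0:ℝ), Real.exp (-z * Real.cosh t)) ≤
      ∫ t in Ioi (0:ℝ), Real.exp (-z * Real.cosh t) * Real.cosh t := by
  apply setIntegral_mono_on (besselK_int_w hz) (besselK_int_wcosh hz) measurableSet_Ioi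
  intro t _
  have hc := Real.one_le_cosh t
  have hw := Real.exp_pos (-z * Real.cosh t)
  nlinarith

lemma besselK_upper {z : ℝ} (hz : 0 < z) :
    z * (∫ t in Ioi (0:ℝ), Real.exp (-z * Real.cosh t) * Real.cosh t) -
      z * (∫ t in Ioi (0:ℝ), Real.exp (-z * Real.cosh t)) ≤
      (∫ t in Ioi (0:ℝ), Real.exp (-z * Real.cosh t)) / 2 := by
  rw [besselK_ibp hz]
  have h1 : (∫ t in Ioi (0:ℝ), Real.exp (-z * Real.cosh t) / (Real.cosh t + 1)) ≤
      ∫ t in Ioi (0:ℝ), Real.exp (-z * Real.cosh t) / 2 := by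
    apply setIntegral_mono_on (besselK_int_wdiv hz)
      ((besselK_int_w hz).div_const 2) measurableSet_Ioi
    intro t _
    have hc := Real.one_le_cosh t
    have hw := Real.exp_pos (-z * Real.cosh t)
    apply div_le_div_of_nonneg_left hw.le (by norm_num)
    linarith
  rw [integral_div] at h1
  exact h1

lemma besselK_cs {z : ℝ} (hz : 0 < z) :
    (∫ t in Ioi (0:ℝ), Real.exp (-z * Real.cosh t)) ^ 2 ≤
      (∫ t in Ioi (0:ℝ), Real.exp (-z * Real.cosh t) * (Real.cosh t + 1)) *
        ∫ t in Ioi (0:ℝ), Real.exp (-z * Real.cosh t) / (Real.cosh t + 1) := by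
  set B := ∫ t in Ioi (0:ℝ), Real.exp (-z * Real.cosh t) with hB
  set C := ∫ t in Ioi (0:ℝ), Real.exp (-z * Real.cosh t) * (Real.cosh t + 1) with hC
  set A := ∫ t in Ioi (0:ℝ), Real.exp (-z * Real.cosh t) / (Real.cosh t + 1) with hA
  have hptid : ∀ t : ℝ,
      C ^ 2 * (Real.exp (-z * Real.cosh t) / (Real.cosh t + 1)) -
        2 * C * B * Real.exp (-z * Real.cosh t) +
        B ^ 2 * (Real.exp (-z * Real.cosh t) * (Real.cosh t + 1)) =
      (C * Real.sqrt (Real.exp (-z * Real.cosh t) / (Real.cosh t + 1)) -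
        B * Real.sqrt (Real.exp (-z * Real.cosh t) * (Real.cosh t + 1))) ^ 2 := by
    intro t
    have hc := Real.one_le_cosh t
    have hcp : (0:ℝ) < Real.cosh t + 1 := by linarith
    have hw := Real.exp_pos (-z * Real.cosh t)
    have ha : (0:ℝ) ≤ Real.exp (-z * Real.cosh t) / (Real.cosh t + 1) := by positivity
    have hb : (0:ℝ) ≤ Real.exp (-z * Real.cosh t) * (Real.cosh t + 1) := by positivity
    have hsq1 : Real.sqrt (Real.exp (-z * Real.cosh t) / (Real.cosh t + 1)) ^ 2 =
        Real.exp (-z * Real.cosh t) / (Real.cosh t + 1) := Real.sq_sqrt ha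
    have hsq2 : Real.sqrt (Real.exp (-z * Real.cosh t) * (Real.cosh t + 1)) ^ 2 =
        Real.exp (-z * Real.cosh t) * (Real.cosh t + 1) := Real.sq_sqrt hb
    have hsq3 : Real.sqrt (Real.exp (-z * Real.cosh t) / (Real.cosh t + 1)) *
        Real.sqrt (Real.exp (-z * Real.cosh t) * (Real.cosh t + 1)) =
        Real.exp (-z * Real.cosh t) := by
      rw [← Real.sqrt_mul ha]
      rw [show Real.exp (-z * Real.cosh t) / (Real.cosh t + 1) *
          (Real.exp (-z * Real.cosh t) * (Real.cosh t + 1)) =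
          Real.exp (-z * Real.cosh t) ^ 2 from by field_simp]
      exact Real.sqrt_sq hw.le
    have expand : (C * Real.sqrt (Real.exp (-z * Real.cosh t) / (Real.cosh t + 1)) -
        B * Real.sqrt (Real.exp (-z * Real.cosh t) * (Real.cosh t + 1))) ^ 2 =
        C ^ 2 * Real.sqrt (Real.exp (-z * Real.cosh t) / (Real.cosh t + 1)) ^ 2 -
        2 * C * B * (Real.sqrt (Real.exp (-z * Real.cosh t) / (Real.cosh t + 1)) *
          Real.sqrt (Real.exp (-z * Real.cosh t) * (Real.cosh t + 1))) +
        B ^ 2 * Real.sqrt (Real.exp (-z * Real.cosh t) * (Real.cosh t + 1)) ^ 2 := by ring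
    rw [expand, hsq1, hsq2, hsq3]
  have hint1 : Integrable (fun t => C ^ 2 * (Real.exp (-z * Real.cosh t) / (Real.cosh t + 1)) -
      2 * C * B * Real.exp (-z * Real.cosh t)) (volume.restrict (Ioi (0:ℝ))) :=
    ((besselK_int_wdiv hz).const_mul _).sub ((besselK_int_w hz).const_mul _)
  have hsplit : ∫ t in Ioi (0:ℝ),
      (C ^ 2 * (Real.exp (-z * Real.cosh t) / (Real.cosh t + 1)) -
        2 * C * B * Real.exp (-z * Real.cosh t) +
        B ^ 2 * (Real.exp (-z * Real.cosh t) * (Real.cosh t + 1))) =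
      C ^ 2 * A - 2 * C * B * B + B ^ 2 * C := by
    rw [integral_add hint1 ((besselK_int_w1c hz).const_mul _),
      integral_sub ((besselK_int_wdiv hz).const_mul _) ((besselK_int_w hz).const_mul _),
      integral_const_mul, integral_const_mul, integral_const_mul]
  have hnn : 0 ≤ C ^ 2 * A - 2 * C * B * B + B ^ 2 * C := by
    rw [← hsplit]
    apply setIntegral_nonneg measurableSet_Ioi
    intro t _
    rw [hptid t]
    positivity
  have hCpos : 0 < C := by
    have h1 : B ≤ C := by
      apply setIntegral_mono_on (besselK_int_w hz) (besselK_int_w1c hz) measurableSet_Ioi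
      intro t _
      have hc := Real.one_le_cosh t
      have hw := Real.exp_pos (-z * Real.cosh t)
      nlinarith
    linarith [besselK_w_pos hz]
  nlinarith [hnn, hCpos]

lemma besselK_zero_eq (z : ℝ) :
    besselK 0 z = ∫ t in Ioi (0:ℝ), Real.exp (-z * Real.cosh t) := by
  simp [besselK]

lemma besselK_one_eq (z : ℝ) :
    besselK 1 z = ∫ t in Ioi (0:ℝ), Real.exp (-z * Real.cosh t) * Real.cosh t := by
  simp [besselK]

theorem laplace_eigenvalue_growth (ε : ℝ) (hε : 0 < ε) (k : ℕ) (hk : 1 ≤ k) :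
    2 * π ^ 2 * ε * (k : ℝ) ≤
      2 * π ^ 2 * ε * (k : ℝ) *
        ((Real.sqrt ((π * ε * (k : ℝ)) ^ 2 + π * ε * (k : ℝ) + 1) + 1) /
          (π * ε * (k : ℝ) + 1)) ∧
    2 * π ^ 2 * ε * (k : ℝ) *
        ((Real.sqrt ((π * ε * (k : ℝ)) ^ 2 + π * ε * (k : ℝ) + 1) + 1) /
          (π * ε * (k : ℝ) + 1)) ≤
      2 * π ^ 2 * ε * (k : ℝ) *
        (besselK 1 (π * ε * (k : ℝ)) / besselK 0 (π * ε * (k : ℝ))) ∧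
    2 * π ^ 2 * ε * (k : ℝ) *
        (besselK 1 (π * ε * (k : ℝ)) / besselK 0 (π * ε * (k : ℝ))) ≤
      2 * π ^ 2 * ε * (k : ℝ) + π := by
  have hk1 : (1:ℝ) ≤ (k:ℝ) := by exact_mod_cast hk
  set x := π * ε * (k : ℝ) with hxdef
  have hx : 0 < x := by
    have := Real.pi_pos
    have hk0 : (0:ℝ) < (k:ℝ) := by linarith
    positivity
  set a := besselK 0 x with hadef
  set b := besselK 1 x with hbdef
  have ha0 : a = ∫ t in Ioi (0:ℝ), Real.exp (-x * Real.cosh t) := besselK_zero_eq x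
  have hb0 : b = ∫ t in Ioi (0:ℝ), Real.exp (-x * Real.cosh t) * Real.cosh t := besselK_one_eq x
  have hapos : 0 < a := by rw [ha0]; exact besselK_w_pos hx
  have hba : a ≤ b := by rw [ha0, hb0]; exact besselK_K0_le_K1 hx
  have hupper : x * b - x * a ≤ a / 2 := by rw [ha0, hb0]; exact besselK_upper hx
  have hcs : a ^ 2 ≤ (b + a) * (x * b - x * a) := by
    have hCeq : (∫ t in Ioi (0:ℝ), Real.exp (-x * Real.cosh t) * (Real.cosh t + 1)) = b + a := by
      rw [ha0, hb0, ← integral_add (besselK_int_wcosh hx) (besselK_int_w hx)]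
      congr 1
      funext t
      ring
    have h1 := besselK_cs hx
    rw [hCeq, ← besselK_ibp hx, ← ha0, ← hb0] at h1
    exact h1
  have hP0 : (0:ℝ) ≤ 2 * π ^ 2 * ε * (k : ℝ) := by
    have := Real.pi_pos; positivity
  have hPx : 2 * π ^ 2 * ε * (k : ℝ) = 2 * π * x := by rw [hxdef]; ring
  have hs2 : Real.sqrt (x ^ 2 + x + 1) ^ 2 = x ^ 2 + x + 1 := Real.sq_sqrt (by positivity)
  have hs0 : (0:ℝ) ≤ Real.sqrt (x ^ 2 + x + 1) := Real.sqrt_nonneg _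
  have hsx : x ≤ Real.sqrt (x ^ 2 + x + 1) := by nlinarith [hs2, hs0, hx]
  clear_value x a b
  refine ⟨?_, ?_, ?_⟩
  · have h1 : 1 ≤ (Real.sqrt (x ^ 2 + x + 1) + 1) / (x + 1) := by
      rw [le_div_iff₀ (by linarith)]
      linarith
    calc 2 * π ^ 2 * ε * (k : ℝ) = 2 * π ^ 2 * ε * (k : ℝ) * 1 := (mul_one _).symm
      _ ≤ _ := mul_le_mul_of_nonneg_left h1 hP0
  · apply mul_le_mul_of_nonneg_left _ hP0
    rw [div_le_div_iff₀ (by linarith) hapos]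
    have key1 : (x + 1) * a ^ 2 ≤ x * b ^ 2 := by nlinarith [hcs]
    have hnn : 0 ≤ (x + 1) * b - a := by nlinarith
    have hsq : (x ^ 2 + x + 1) * a ^ 2 ≤ ((x + 1) * b - a) ^ 2 := by
      nlinarith [mul_le_mul_of_nonneg_left key1 (by linarith : (0:ℝ) ≤ x + 1),
        mul_nonneg (by linarith : (0:ℝ) ≤ x + 1) (sq_nonneg (b - a))]
    have hsa : Real.sqrt (x ^ 2 + x + 1) * a ≤ (x + 1) * b - a := by
      have e1 : Real.sqrt (x ^ 2 + x + 1) * a = Real.sqrt ((x ^ 2 + x + 1) * a ^ 2) := by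
        rw [Real.sqrt_mul (by positivity), Real.sqrt_sq hapos.le]
      rw [e1]
      calc Real.sqrt ((x ^ 2 + x + 1) * a ^ 2) ≤ Real.sqrt (((x + 1) * b - a) ^ 2) :=
            Real.sqrt_le_sqrt hsq
        _ = (x + 1) * b - a := Real.sqrt_sq hnn
    nlinarith [hsa]
  · rw [← mul_div_assoc, div_le_iff₀ hapos, hPx]
    have h := mul_le_mul_of_nonneg_left hupper (by positivity : (0:ℝ) ≤ 2 * π)
    nlinarith [h]
end

section
/- For every real ε > 0 and every positive integer k, writing K_j = K_j(πεk) for j = 0, 1, one has 2K₀K₁ + πεk·(K₀² − K₁²) > 0, and the quantity λᵗ = 4π²εk·K₁² / (2K₀K₁ + πεk·(K₀² − K₁²)) satisfies the growth bounds 4π²εk < λᵗ < 4π²εk + 2π. -/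
set_option maxHeartbeats 1000000

open Real

namespace SBT

open MeasureTheory Set Filter


lemma exp_le_two_cosh (s : ℝ) : exp s ≤ 2 * cosh s := by
  rw [Real.cosh_eq]; have := (Real.exp_pos (-s)).le; linarith

lemma abs_sinh_le (x : ℝ) : |sinh x| ≤ cosh x + 1 := by
  have h := Real.sinh_sq x
  have hc : (1:ℝ) ≤ cosh x := Real.one_le_cosh x
  rw [abs_le]
  constructor <;> nlinarith [sq_nonneg (sinh x + cosh x + 1), sq_nonneg (sinh x - cosh x - 1)]

lemma key_bound {z : ℝ} (hz : 0 < z) (s : ℝ) :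
    cosh s * exp (-z * cosh s) ≤ 8 / z ^ 2 * exp (-s) := by
  have hc : 0 < cosh s := Real.cosh_pos s
  have hzc : 0 < z * cosh s := mul_pos hz hc
  have h2 : (z * cosh s) ^ 2 / 4 ≤ exp (z * cosh s) := by
    have h1 : z * cosh s / 2 ≤ exp (z * cosh s / 2) := by
      have := Real.add_one_le_exp (z * cosh s / 2); linarith
    have hmul : exp (z * cosh s / 2) * exp (z * cosh s / 2) = exp (z * cosh s) := by
      rw [← Real.exp_add]; ring_nf
    nlinarith [mul_le_mul h1 h1 (by positivity) (Real.exp_pos _).le]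
  have hmul1 : exp (-z * cosh s) * exp (z * cosh s) = 1 := by
    rw [← Real.exp_add]; simp
  have hE4 : exp (-z * cosh s) * (z * cosh s) ^ 2 ≤ 4 := by
    nlinarith [mul_le_mul_of_nonneg_left h2 (Real.exp_pos (-z * cosh s)).le]
  have hcs : exp s ≤ 2 * cosh s := exp_le_two_cosh s
  rw [Real.exp_neg s, ← div_eq_mul_inv, div_div, le_div_iff₀ (by positivity)]
  have hprod : exp (-z * cosh s) * (z * cosh s) ^ 2 * exp s ≤ 4 * (2 * cosh s) :=
    mul_le_mul hE4 hcs (Real.exp_pos s).le (by norm_num)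
  have hgoal : cosh s * exp (-z * cosh s) * (z ^ 2 * exp s) ≤ 8 := by
    have h8 : cosh s * (cosh s * exp (-z * cosh s) * (z ^ 2 * exp s)) ≤ cosh s * 8 := by
      nlinarith [hprod]
    exact le_of_mul_le_mul_left h8 hc
  nlinarith [hgoal]

lemma integrable_aux {z : ℝ} (hz : 0 < z) {f : ℝ → ℝ} (hf : Continuous f)
    {c : ℝ} (hc : 0 ≤ c) (hb : ∀ s, |f s| ≤ c * cosh s) :
    IntegrableOn (fun s => exp (-z * cosh s) * f s) (Ioi (0:ℝ)) := by
  have hg : IntegrableOn (fun s => c * (8 / z ^ 2) * exp (-s)) (Ioi (0:ℝ)) := by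
    have h1 : IntegrableOn (fun s : ℝ => exp (-1 * s)) (Ioi (0:ℝ)) :=
      exp_neg_integrableOn_Ioi 0 one_pos
    have h1' : IntegrableOn (fun s : ℝ => exp (-s)) (Ioi (0:ℝ)) := by
      simpa using h1
    exact h1'.const_mul _
  apply Integrable.mono hg
  · exact ((Real.continuous_exp.comp (continuous_const.mul Real.continuous_cosh)).mul
      hf).aestronglyMeasurable
  · filter_upwards [] with s
    have hkb : cosh s * exp (-z * cosh s) ≤ 8 / z ^ 2 * exp (-s) := key_bound hz s
    have he : 0 < exp (-z * cosh s) := Real.exp_pos _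
    have h0 : ‖exp (-z * cosh s) * f s‖ = exp (-z * cosh s) * |f s| := by
      rw [norm_mul, Real.norm_eq_abs, Real.norm_eq_abs, abs_of_pos he]
    rw [h0, Real.norm_eq_abs]
    have h2 : exp (-z * cosh s) * |f s| ≤ exp (-z * cosh s) * (c * cosh s) :=
      mul_le_mul_of_nonneg_left (hb s) he.le
    have h3 : exp (-z * cosh s) * (c * cosh s) ≤ c * (8 / z ^ 2 * exp (-s)) := by
      calc exp (-z * cosh s) * (c * cosh s) = c * (cosh s * exp (-z * cosh s)) := by ring
        _ ≤ c * (8 / z ^ 2 * exp (-s)) := mul_le_mul_of_nonneg_left hkb hc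
    calc exp (-z * cosh s) * |f s| ≤ c * (8 / z ^ 2 * exp (-s)) := le_trans h2 h3
      _ ≤ |c * (8 / z ^ 2) * exp (-s)| := by
          rw [abs_of_nonneg (by positivity)]; ring_nf; exact le_rfl

lemma cosh_ge_half (x : ℝ) : x / 2 ≤ cosh x := by
  rw [Real.cosh_eq]
  have h1 : x + 1 ≤ exp x := Real.add_one_le_exp x
  have h2 : 0 < exp (-x) := Real.exp_pos _
  linarith

lemma ibp {z : ℝ} (hz : 0 < z) {g g' : ℝ → ℝ}
    (hg : ∀ x, HasDerivAt g (g' x) x) (hg0 : g 0 = 0)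
    (hgb : ∀ x, |g x| ≤ 1)
    (hint1 : IntegrableOn (fun s => exp (-z * cosh s) * (z * sinh s * g s)) (Ioi (0:ℝ)))
    (hint2 : IntegrableOn (fun s => exp (-z * cosh s) * g' s) (Ioi (0:ℝ))) :
    ∫ s in Ioi (0:ℝ), exp (-z * cosh s) * (z * sinh s * g s)
      = ∫ s in Ioi (0:ℝ), exp (-z * cosh s) * g' s := by
  set F : ℝ → ℝ := fun s => -(exp (-z * cosh s) * g s) with hF
  have hderiv : ∀ x ∈ Ici (0:ℝ), HasDerivAt F
      (exp (-z * cosh x) * (z * sinh x * g x) - exp (-z * cosh x) * g' x) x := by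
    intro x _
    have hE : HasDerivAt (fun s : ℝ => exp (-z * cosh s))
        (exp (-z * cosh x) * (-z * sinh x)) x :=
      (HasDerivAt.const_mul (-z) (Real.hasDerivAt_cosh x)).exp
    have : HasDerivAt (fun s => -(exp (-z * cosh s) * g s)) _ x := (hE.mul (hg x)).neg
    convert this using 1
    ring
  have htend : Tendsto F atTop (nhds 0) := by
    apply squeeze_zero_norm' (a := fun x => exp (-(z/2) * x))
    · filter_upwards [eventually_ge_atTop (0:ℝ)] with x hx
      have h1 : ‖F x‖ = exp (-z * cosh x) * |g x| := by
        rw [hF]; simp only [norm_neg, norm_mul, Real.norm_eq_abs,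
          abs_of_pos (Real.exp_pos _)]
      rw [h1]
      have h2 : exp (-z * cosh x) * |g x| ≤ exp (-z * cosh x) * 1 :=
        mul_le_mul_of_nonneg_left (hgb x) (Real.exp_pos _).le
      have h3 : exp (-z * cosh x) ≤ exp (-(z/2) * x) := by
        apply Real.exp_le_exp.mpr
        have := cosh_ge_half x
        nlinarith
      linarith
    · have h4 : Tendsto (fun x : ℝ => -(z/2) * x) atTop atBot :=
        tendsto_id.const_mul_atTop_of_neg (by linarith)
      exact Real.tendsto_exp_atBot.comp h4
  have key := integral_Ioi_of_hasDerivAt_of_tendsto'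
    (f := F) (f' := fun x => exp (-z * cosh x) * (z * sinh x * g x) - exp (-z * cosh x) * g' x)
    hderiv (hint1.sub hint2) htend
  have hF0 : F 0 = 0 := by rw [hF]; simp [hg0]
  rw [hF0, sub_zero] at key
  rw [integral_sub hint1 hint2] at key
  linarith

lemma pos_aux {z : ℝ} {f : ℝ → ℝ} {x y : ℝ} (hxy : 0 < x) (hx2 : x < y)
    (hInt : IntegrableOn (fun s => exp (-z * cosh s) * f s) (Ioi (0:ℝ)))
    (hf0 : ∀ s, 0 < s → 0 ≤ f s)
    (hlb : ∀ s, s ∈ Ioc x y → exp (-z * cosh y) * f x ≤ exp (-z * cosh s) * f s)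
    (hfx : 0 < exp (-z * cosh y) * f x) :
    0 < ∫ s in Ioi (0:ℝ), exp (-z * cosh s) * f s := by
  have hss : Ioc x y ⊆ Ioi (0:ℝ) := fun s hs => lt_trans hxy hs.1
  have h1 : ∫ s in Ioc x y, exp (-z * cosh s) * f s
      ≤ ∫ s in Ioi (0:ℝ), exp (-z * cosh s) * f s := by
    apply setIntegral_mono_set hInt
    · filter_upwards [ae_restrict_mem measurableSet_Ioi] with s hs
      exact mul_nonneg (Real.exp_pos _).le (hf0 s hs)
    · exact HasSubset.Subset.eventuallyLE hss
  have h2 : ∫ _s in Ioc x y, (exp (-z * cosh y) * f x)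
      ≤ ∫ s in Ioc x y, exp (-z * cosh s) * f s := by
    apply setIntegral_mono_on
    · exact integrableOn_const measure_Ioc_lt_top.ne
    · exact hInt.mono_set hss
    · exact measurableSet_Ioc
    · exact hlb
  have h3 : ∫ _s in Ioc x y, (exp (-z * cosh y) * f x)
      = (y - x) * (exp (-z * cosh y) * f x) := by
    rw [setIntegral_const, Real.volume_real_Ioc_of_le hx2.le, smul_eq_mul]
  nlinarith [mul_pos (sub_pos.mpr hx2) hfx]

lemma exp_cosh_mono {z : ℝ} (hz : 0 < z) {x y : ℝ} (h : |x| ≤ |y|) :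
    exp (-z * cosh y) ≤ exp (-z * cosh x) := by
  apply Real.exp_le_exp.mpr
  have := Real.cosh_le_cosh.mpr h
  nlinarith


lemma core (z : ℝ) (hz : 0 < z) :
    0 < 2 * (∫ s in Ioi (0:ℝ), exp (-z * cosh s) * 1) *
          (∫ s in Ioi (0:ℝ), exp (-z * cosh s) * cosh s) +
        z * ((∫ s in Ioi (0:ℝ), exp (-z * cosh s) * 1) ^ 2 -
          (∫ s in Ioi (0:ℝ), exp (-z * cosh s) * cosh s) ^ 2) ∧
      2 * (∫ s in Ioi (0:ℝ), exp (-z * cosh s) * 1) *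
          (∫ s in Ioi (0:ℝ), exp (-z * cosh s) * cosh s) +
        z * ((∫ s in Ioi (0:ℝ), exp (-z * cosh s) * 1) ^ 2 -
          (∫ s in Ioi (0:ℝ), exp (-z * cosh s) * cosh s) ^ 2) <
        (∫ s in Ioi (0:ℝ), exp (-z * cosh s) * cosh s) ^ 2 ∧
      2 * z * (∫ s in Ioi (0:ℝ), exp (-z * cosh s) * cosh s) ^ 2 <
        (2 * z + 1) * (2 * (∫ s in Ioi (0:ℝ), exp (-z * cosh s) * 1) *
          (∫ s in Ioi (0:ℝ), exp (-z * cosh s) * cosh s) +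
        z * ((∫ s in Ioi (0:ℝ), exp (-z * cosh s) * 1) ^ 2 -
          (∫ s in Ioi (0:ℝ), exp (-z * cosh s) * cosh s) ^ 2)) := by
  have hcp : ∀ s : ℝ, 0 < cosh s + 1 := fun s => by nlinarith [Real.cosh_pos s]
  set A : ℝ := ∫ s in Ioi (0:ℝ), exp (-z * cosh s) * 1 with hAdef
  set B : ℝ := ∫ s in Ioi (0:ℝ), exp (-z * cosh s) * cosh s with hBdef
  set C : ℝ := ∫ s in Ioi (0:ℝ), exp (-z * cosh s) * (1 / (cosh s + 1)) with hCdef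
  set Q : ℝ := ∫ s in Ioi (0:ℝ), exp (-z * cosh s) * (1 / (cosh s + 1) ^ 2) with hQdef
  -- continuity facts
  have hcC : Continuous fun s : ℝ => 1 / (cosh s + 1) :=
    continuous_const.div (Real.continuous_cosh.add continuous_const) fun s => (hcp s).ne'
  have hcQ : Continuous fun s : ℝ => 1 / (cosh s + 1) ^ 2 :=
    continuous_const.div ((Real.continuous_cosh.add continuous_const).pow 2)
      fun s => pow_ne_zero 2 (hcp s).ne'
  -- integrabilities
  have intA : IntegrableOn (fun s => exp (-z * cosh s) * 1) (Ioi (0:ℝ)) :=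
    integrable_aux hz continuous_const zero_le_one fun s => by
      rw [abs_one, one_mul]; exact Real.one_le_cosh s
  have intB : IntegrableOn (fun s => exp (-z * cosh s) * cosh s) (Ioi (0:ℝ)) :=
    integrable_aux hz Real.continuous_cosh zero_le_one fun s => by
      rw [abs_of_pos (Real.cosh_pos s), one_mul]
  have intC : IntegrableOn (fun s => exp (-z * cosh s) * (1 / (cosh s + 1))) (Ioi (0:ℝ)) := by
    apply integrable_aux hz hcC zero_le_one fun s => ?_
    have h1 := Real.one_le_cosh s
    have h2 := hcp s
    rw [one_mul, abs_of_pos (by positivity)]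
    rw [div_le_iff₀ h2]
    nlinarith
  have intQ : IntegrableOn (fun s => exp (-z * cosh s) * (1 / (cosh s + 1) ^ 2)) (Ioi (0:ℝ)) := by
    apply integrable_aux hz hcQ zero_le_one fun s => ?_
    have h1 := Real.one_le_cosh s
    have h2 := hcp s
    rw [one_mul, abs_of_pos (by positivity)]
    rw [div_le_iff₀ (by positivity)]
    nlinarith
  have intBA : IntegrableOn (fun s => exp (-z * cosh s) * (cosh s - 1)) (Ioi (0:ℝ)) := by
    apply integrable_aux hz (f := fun s => cosh s - 1) (Real.continuous_cosh.sub continuous_const) zero_le_one fun s => ?_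
    have h1 := Real.one_le_cosh s
    rw [one_mul, abs_of_nonneg (by linarith)]
    linarith
  have intE : IntegrableOn
      (fun s => exp (-z * cosh s) * ((cosh s - 1) / (cosh s + 1))) (Ioi (0:ℝ)) := by
    apply integrable_aux hz (f := fun s => (cosh s - 1) / (cosh s + 1))
      (Continuous.div (Real.continuous_cosh.sub continuous_const)
        (Real.continuous_cosh.add continuous_const) fun s => (hcp s).ne')
      zero_le_one fun s => ?_
    have h1 := Real.one_le_cosh s
    have h2 := hcp s
    rw [one_mul, abs_of_nonneg (div_nonneg (by linarith) h2.le)]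
    rw [div_le_iff₀ h2]
    nlinarith
  -- splitting lemma
  have hsplit : ∀ (f g : ℝ → ℝ) (a b : ℝ),
      IntegrableOn (fun s => exp (-z * cosh s) * f s) (Ioi (0:ℝ)) →
      IntegrableOn (fun s => exp (-z * cosh s) * g s) (Ioi (0:ℝ)) →
      (∫ s in Ioi (0:ℝ), exp (-z * cosh s) * (a * f s + b * g s))
        = a * (∫ s in Ioi (0:ℝ), exp (-z * cosh s) * f s)
          + b * ∫ s in Ioi (0:ℝ), exp (-z * cosh s) * g s := by
    intro f g a b hf hg
    have h0 : (fun s => exp (-z * cosh s) * (a * f s + b * g s))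
        = fun s => a * (exp (-z * cosh s) * f s) + b * (exp (-z * cosh s) * g s) :=
      funext fun s => by ring
    rw [h0, integral_add (hf.const_mul a) (hg.const_mul b),
      integral_const_mul, integral_const_mul]
  have hsplit3 : ∀ (f g h : ℝ → ℝ) (a b c : ℝ),
      IntegrableOn (fun s => exp (-z * cosh s) * f s) (Ioi (0:ℝ)) →
      IntegrableOn (fun s => exp (-z * cosh s) * g s) (Ioi (0:ℝ)) →
      IntegrableOn (fun s => exp (-z * cosh s) * h s) (Ioi (0:ℝ)) →
      (∫ s in Ioi (0:ℝ), exp (-z * cosh s) * (a * f s + b * g s + c * h s))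
        = a * (∫ s in Ioi (0:ℝ), exp (-z * cosh s) * f s)
          + b * (∫ s in Ioi (0:ℝ), exp (-z * cosh s) * g s)
          + c * ∫ s in Ioi (0:ℝ), exp (-z * cosh s) * h s := by
    intro f g h a b c hf hg hh
    have h0 : (fun s => exp (-z * cosh s) * (a * f s + b * g s + c * h s))
        = fun s => (exp (-z * cosh s) * (a * f s + b * g s))
            + c * (exp (-z * cosh s) * h s) :=
      funext fun s => by ring
    have h1 : IntegrableOn (fun s => exp (-z * cosh s) * (a * f s + b * g s)) (Ioi (0:ℝ)) := by
      have h2 : (fun s => exp (-z * cosh s) * (a * f s + b * g s))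
          = fun s => a * (exp (-z * cosh s) * f s) + b * (exp (-z * cosh s) * g s) :=
        funext fun s => by ring
      rw [h2]; exact (hf.const_mul a).add (hg.const_mul b)
    rw [h0, integral_add h1 (hh.const_mul c), hsplit f g a b hf hg, integral_const_mul]
  -- R1 identity
  have hg1 : ∀ x : ℝ, HasDerivAt (fun s => sinh s / (cosh s + 1)) (1 / (cosh x + 1)) x := by
    intro x
    have h : HasDerivAt (fun s => sinh s / (cosh s + 1)) _ x := (Real.hasDerivAt_sinh x).div ((Real.hasDerivAt_cosh x).add_const 1) (hcp x).ne'
    convert h using 1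
    rw [div_eq_div_iff (hcp x).ne' (pow_ne_zero 2 (hcp x).ne')]
    linear_combination (cosh x + 1) * Real.sinh_sq x
  have hgb1 : ∀ x : ℝ, |sinh x / (cosh x + 1)| ≤ 1 := by
    intro x
    rw [abs_div, abs_of_pos (hcp x), div_le_one (hcp x)]
    exact abs_sinh_le x
  have hfun1 : ∀ s : ℝ, exp (-z * cosh s) * (z * sinh s * (sinh s / (cosh s + 1)))
      = z * (exp (-z * cosh s) * (cosh s - 1)) := by
    intro s
    have hne := (hcp s).ne'
    rw [neg_mul z (cosh s)]
    field_simp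
    linear_combination Real.sinh_sq s
  have intZ1 : IntegrableOn
      (fun s => exp (-z * cosh s) * (z * sinh s * (sinh s / (cosh s + 1)))) (Ioi (0:ℝ)) := by
    apply (intBA.const_mul z).congr
    filter_upwards [] with s
    exact (hfun1 s).symm
  have hR1 : z * (∫ s in Ioi (0:ℝ), exp (-z * cosh s) * (cosh s - 1)) = C := by
    have e1 : z * (∫ s in Ioi (0:ℝ), exp (-z * cosh s) * (cosh s - 1))
        = ∫ s in Ioi (0:ℝ), exp (-z * cosh s) * (z * sinh s * (sinh s / (cosh s + 1))) := by
      rw [← integral_const_mul]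
      apply integral_congr_ae
      filter_upwards [] with s
      exact (hfun1 s).symm
    rw [e1, ibp hz hg1 (by simp) hgb1 intZ1 intC]
  -- R3 identity
  have hg2 : ∀ x : ℝ, HasDerivAt (fun s => sinh s / (cosh s + 1) ^ 2)
      ((2 - cosh x) / (cosh x + 1) ^ 2) x := by
    intro x
    have h : HasDerivAt (fun s => sinh s / (cosh s + 1) ^ 2) _ x := (Real.hasDerivAt_sinh x).div
      (((Real.hasDerivAt_cosh x).add_const 1).pow 2) (pow_ne_zero 2 (hcp x).ne')
    convert h using 1
    rw [div_eq_div_iff (pow_ne_zero 2 (hcp x).ne') (pow_ne_zero 2 (pow_ne_zero 2 (hcp x).ne'))]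
    push_cast
    linear_combination (2 * (cosh x + 1) ^ 3) * Real.sinh_sq x
  have hgb2 : ∀ x : ℝ, |sinh x / (cosh x + 1) ^ 2| ≤ 1 := by
    intro x
    rw [abs_div, abs_of_pos (pow_pos (hcp x) 2), div_le_one (pow_pos (hcp x) 2)]
    have h1 := abs_sinh_le x
    nlinarith [hcp x, Real.cosh_pos x, abs_nonneg (sinh x), mul_pos (hcp x) (Real.cosh_pos x)]
  have hfun2 : ∀ s : ℝ, exp (-z * cosh s) * (z * sinh s * (sinh s / (cosh s + 1) ^ 2))
      = z * (exp (-z * cosh s) * ((cosh s - 1) / (cosh s + 1))) := by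
    intro s
    have hne := (hcp s).ne'
    rw [neg_mul z (cosh s)]
    field_simp
    linear_combination Real.sinh_sq s
  have intZ2 : IntegrableOn
      (fun s => exp (-z * cosh s) * (z * sinh s * (sinh s / (cosh s + 1) ^ 2))) (Ioi (0:ℝ)) := by
    apply (intE.const_mul z).congr
    filter_upwards [] with s
    exact (hfun2 s).symm
  have hfun3 : ∀ s : ℝ, exp (-z * cosh s) * ((2 - cosh s) / (cosh s + 1) ^ 2)
      = exp (-z * cosh s) * (3 * (1 / (cosh s + 1) ^ 2) + (-1) * (1 / (cosh s + 1))) := by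
    intro s
    have h2 := (hcp s).ne'
    field_simp
    ring
  have intG2 : IntegrableOn
      (fun s => exp (-z * cosh s) * ((2 - cosh s) / (cosh s + 1) ^ 2)) (Ioi (0:ℝ)) := by
    have h1 : IntegrableOn (fun s => exp (-z * cosh s)
        * (3 * (1 / (cosh s + 1) ^ 2) + (-1) * (1 / (cosh s + 1)))) (Ioi (0:ℝ)) := by
      have h2 : (fun s => exp (-z * cosh s)
          * (3 * (1 / (cosh s + 1) ^ 2) + (-1) * (1 / (cosh s + 1))))
          = fun s => 3 * (exp (-z * cosh s) * (1 / (cosh s + 1) ^ 2))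
            + (-1) * (exp (-z * cosh s) * (1 / (cosh s + 1))) := funext fun s => by ring
      rw [h2]; exact (intQ.const_mul 3).add (intC.const_mul (-1))
    apply h1.congr
    filter_upwards [] with s
    exact (hfun3 s).symm
  have hR3 : z * (∫ s in Ioi (0:ℝ), exp (-z * cosh s) * ((cosh s - 1) / (cosh s + 1)))
      = ∫ s in Ioi (0:ℝ), exp (-z * cosh s) * ((2 - cosh s) / (cosh s + 1) ^ 2) := by
    have e1 : z * (∫ s in Ioi (0:ℝ), exp (-z * cosh s) * ((cosh s - 1) / (cosh s + 1)))
        = ∫ s in Ioi (0:ℝ), exp (-z * cosh s) * (z * sinh s * (sinh s / (cosh s + 1) ^ 2)) := by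
      rw [← integral_const_mul]
      apply integral_congr_ae
      filter_upwards [] with s
      exact (hfun2 s).symm
    rw [e1, ibp hz hg2 (by simp) hgb2 intZ2 intG2]
  -- rewrite both sides of R1 and R3 in terms of A B C Q
  have eBA : (∫ s in Ioi (0:ℝ), exp (-z * cosh s) * (cosh s - 1)) = B - A := by
    have e0 : (fun s => exp (-z * cosh s) * (cosh s - 1))
        = fun s => exp (-z * cosh s) * (1 * cosh s + (-1) * 1) := funext fun s => by ring
    rw [e0, hsplit _ _ 1 (-1) intB intA]; ring
  have eE : (∫ s in Ioi (0:ℝ), exp (-z * cosh s) * ((cosh s - 1) / (cosh s + 1)))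
      = A - 2 * C := by
    have e0 : (fun s => exp (-z * cosh s) * ((cosh s - 1) / (cosh s + 1)))
        = fun s => exp (-z * cosh s) * (1 * 1 + (-2) * (1 / (cosh s + 1))) :=
      funext fun s => by
        have := (hcp s).ne'
        field_simp
        ring
    rw [e0, hsplit _ _ 1 (-2) intA intC]; ring
  have eG2 : (∫ s in Ioi (0:ℝ), exp (-z * cosh s) * ((2 - cosh s) / (cosh s + 1) ^ 2))
      = 3 * Q - C := by
    have e0 : (fun s => exp (-z * cosh s) * ((2 - cosh s) / (cosh s + 1) ^ 2))
        = fun s => exp (-z * cosh s) * (3 * (1 / (cosh s + 1) ^ 2) + (-1) * (1 / (cosh s + 1))) :=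
      funext fun s => hfun3 s
    rw [e0, hsplit _ _ 3 (-1) intQ intC]; ring
  have h1 : z * (B - A) = C := by rw [← eBA]; exact hR1
  have h3 : z * (A - 2 * C) = 3 * Q - C := by rw [← eE, ← eG2]; exact hR3
  -- Cauchy-Schwarz 1
  have hCS1 : A ^ 2 ≤ (A + B) * C := by
    have hquad : ∀ x : ℝ, 0 ≤ (A + B) * (x * x) + (-(2 * A)) * x + C := by
      intro x
      have hnn : 0 ≤ ∫ s in Ioi (0:ℝ),
          exp (-z * cosh s) * ((x * (cosh s + 1) - 1) ^ 2 / (cosh s + 1)) := by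
        apply setIntegral_nonneg measurableSet_Ioi
        intro s _
        exact mul_nonneg (Real.exp_pos _).le (div_nonneg (sq_nonneg _) (hcp s).le)
      have heq : (∫ s in Ioi (0:ℝ),
            exp (-z * cosh s) * ((x * (cosh s + 1) - 1) ^ 2 / (cosh s + 1)))
          = (x * x) * B + (x * x - 2 * x) * A + 1 * C := by
        have e0 : (fun s => exp (-z * cosh s) * ((x * (cosh s + 1) - 1) ^ 2 / (cosh s + 1)))
            = fun s => exp (-z * cosh s)
              * ((x * x) * cosh s + (x * x - 2 * x) * 1 + 1 * (1 / (cosh s + 1))) :=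
          funext fun s => by
            have := (hcp s).ne'
            field_simp
            ring
        rw [e0, hsplit3 _ _ _ (x * x) (x * x - 2 * x) 1 intB intA intC]
      nlinarith [hnn, heq]
    have hd := discrim_le_zero hquad
    rw [discrim] at hd
    nlinarith [hd]
  -- Cauchy-Schwarz 2
  have hCS2 : C ^ 2 ≤ A * Q := by
    have hquad : ∀ x : ℝ, 0 ≤ A * (x * x) + (-(2 * C)) * x + Q := by
      intro x
      have hnn : 0 ≤ ∫ s in Ioi (0:ℝ),
          exp (-z * cosh s) * ((x - 1 / (cosh s + 1)) ^ 2) := by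
        apply setIntegral_nonneg measurableSet_Ioi
        intro s _
        exact mul_nonneg (Real.exp_pos _).le (sq_nonneg _)
      have heq : (∫ s in Ioi (0:ℝ), exp (-z * cosh s) * ((x - 1 / (cosh s + 1)) ^ 2))
          = (x * x) * A + (-(2 * x)) * C + 1 * Q := by
        have e0 : (fun s => exp (-z * cosh s) * ((x - 1 / (cosh s + 1)) ^ 2))
            = fun s => exp (-z * cosh s)
              * ((x * x) * 1 + (-(2 * x)) * (1 / (cosh s + 1)) + 1 * (1 / (cosh s + 1) ^ 2)) :=
          funext fun s => by
            have := (hcp s).ne'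
            field_simp
            ring
        rw [e0, hsplit3 _ _ _ (x * x) (-(2 * x)) 1 intA intC intQ]
      nlinarith [hnn, heq]
    have hd := discrim_le_zero hquad
    rw [discrim] at hd
    nlinarith [hd]
  -- pointwise inequalities
  have hC2 : 2 * C ≤ A := by
    have h0 : (∫ s in Ioi (0:ℝ), (2 : ℝ) * (exp (-z * cosh s) * (1 / (cosh s + 1))))
        ≤ ∫ s in Ioi (0:ℝ), exp (-z * cosh s) * 1 := by
      apply integral_mono (intC.const_mul 2) intA
      intro s
      have h1 := Real.one_le_cosh s
      have h2 := hcp s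
      have h3 : 2 * (1 / (cosh s + 1)) ≤ 1 := by
        rw [mul_one_div, div_le_one h2]; linarith
      have h4 := (Real.exp_pos (-z * cosh s)).le
      calc 2 * (exp (-z * cosh s) * (1 / (cosh s + 1)))
          = exp (-z * cosh s) * (2 * (1 / (cosh s + 1))) := by ring
        _ ≤ exp (-z * cosh s) * 1 := mul_le_mul_of_nonneg_left h3 h4
    rw [integral_const_mul] at h0
    exact h0
  have hAB : A ≤ B := by
    apply integral_mono intA intB
    intro s
    exact mul_le_mul_of_nonneg_left (Real.one_le_cosh s) (Real.exp_pos _).le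
  have hCnn : 0 ≤ C :=
    setIntegral_nonneg measurableSet_Ioi fun s _ =>
      mul_nonneg (Real.exp_pos _).le (by positivity)
  have hQnn : 0 ≤ Q :=
    setIntegral_nonneg measurableSet_Ioi fun s _ =>
      mul_nonneg (Real.exp_pos _).le (by positivity)
  -- strict positivity
  have hApos : 0 < A := by
    apply pos_aux one_pos one_lt_two intA (fun s _ => zero_le_one)
    · intro s hs
      have habs : |s| ≤ |2| := by
        rw [abs_of_pos (lt_trans one_pos hs.1), abs_of_pos (by norm_num : (0:ℝ) < 2)]
        exact hs.2
      exact mul_le_mul_of_nonneg_right (exp_cosh_mono hz habs) zero_le_one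
    · simpa using Real.exp_pos (-z * cosh 2)
  have hBApos : 0 < ∫ s in Ioi (0:ℝ), exp (-z * cosh s) * (cosh s - 1) := by
    apply pos_aux one_pos one_lt_two intBA (fun s _ => by nlinarith [Real.one_le_cosh s])
    · intro s hs
      have hs0 : (0:ℝ) < s := lt_trans one_pos hs.1
      have habs : |s| ≤ |2| := by
        rw [abs_of_pos hs0, abs_of_pos (by norm_num : (0:ℝ) < 2)]; exact hs.2
      have habs1 : |(1:ℝ)| ≤ |s| := by
        rw [abs_one, abs_of_pos hs0]; exact hs.1.le
      have hc1 : cosh 1 ≤ cosh s := Real.cosh_le_cosh.mpr habs1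
      apply mul_le_mul (exp_cosh_mono hz habs) (by linarith)
      · nlinarith [Real.one_le_cosh 1]
      · exact (Real.exp_pos _).le
    · apply mul_pos (Real.exp_pos _)
      have : 1 < cosh 1 := Real.one_lt_cosh.mpr one_ne_zero
      linarith
  have hBA : A < B := by rw [eBA] at hBApos; linarith
  -- final algebra
  have eD : 2 * A * B + z * (A ^ 2 - B ^ 2) = 2 * A * B - (A + B) * C := by
    linear_combination (-(A + B)) * h1
  rw [eD]
  refine ⟨?_, ?_, ?_⟩
  · nlinarith [mul_nonneg (by linarith : (0:ℝ) ≤ A + B) (by linarith : (0:ℝ) ≤ A - 2 * C),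
      mul_pos hApos (by linarith : 0 < B), sq_nonneg A,
      mul_nonneg hApos.le (by linarith : (0:ℝ) ≤ B - A)]
  · nlinarith [hCS1, mul_pos (sub_pos.mpr hBA) (sub_pos.mpr hBA)]
  · have eG : (2 * z + 1) * (2 * A * B - (A + B) * C) - 2 * z * B ^ 2
        = 2 * A * B - A * C - 3 * B * C - 2 * C ^ 2 + 6 * A * Q := by
      linear_combination (-2 * (B - A) - 2 * C) * h1 + (2 * A) * h3
    have hGpos : 0 < 2 * A * B - A * C - 3 * B * C - 2 * C ^ 2 + 6 * A * Q := by
      nlinarith [hCS2,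
        mul_nonneg (by linarith : (0:ℝ) ≤ A + 3 * B) (by linarith : (0:ℝ) ≤ A - 2 * C),
        mul_pos hApos (sub_pos.mpr hBA), sq_nonneg C]
    linarith [eG, hGpos]

end SBT

theorem stokes_tangential_eigenvalue_growth (ε : ℝ) (hε : 0 < ε) (k : ℕ) (hk : 1 ≤ k) :
    0 < 2 * besselK 0 (π * ε * (k : ℝ)) * besselK 1 (π * ε * (k : ℝ)) +
        π * ε * (k : ℝ) *
          ((besselK 0 (π * ε * (k : ℝ))) ^ 2 - (besselK 1 (π * ε * (k : ℝ))) ^ 2) ∧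
    4 * π ^ 2 * ε * (k : ℝ) <
      4 * π ^ 2 * ε * (k : ℝ) * (besselK 1 (π * ε * (k : ℝ))) ^ 2 /
        (2 * besselK 0 (π * ε * (k : ℝ)) * besselK 1 (π * ε * (k : ℝ)) +
          π * ε * (k : ℝ) *
            ((besselK 0 (π * ε * (k : ℝ))) ^ 2 - (besselK 1 (π * ε * (k : ℝ))) ^ 2)) ∧
    4 * π ^ 2 * ε * (k : ℝ) * (besselK 1 (π * ε * (k : ℝ))) ^ 2 /
        (2 * besselK 0 (π * ε * (k : ℝ)) * besselK 1 (π * ε * (k : ℝ)) +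
          π * ε * (k : ℝ) *
            ((besselK 0 (π * ε * (k : ℝ))) ^ 2 - (besselK 1 (π * ε * (k : ℝ))) ^ 2)) <
      4 * π ^ 2 * ε * (k : ℝ) + 2 * π := by
  have hk0 : (0:ℝ) < (k:ℝ) := by
    have : 0 < k := lt_of_lt_of_le Nat.zero_lt_one hk
    exact_mod_cast this
  have hz : 0 < π * ε * (k : ℝ) := by positivity
  obtain ⟨g1, g2, g3⟩ := SBT.core (π * ε * (k : ℝ)) hz
  have hb0 : besselK 0 (π * ε * (k : ℝ))
      = ∫ s in Set.Ioi (0:ℝ), exp (-(π * ε * (k : ℝ)) * cosh s) * 1 := by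
    simp [besselK]
  have hb1 : besselK 1 (π * ε * (k : ℝ))
      = ∫ s in Set.Ioi (0:ℝ), exp (-(π * ε * (k : ℝ)) * cosh s) * cosh s := by
    simp [besselK]
  rw [hb0, hb1]
  refine ⟨g1, ?_, ?_⟩
  · rw [lt_div_iff₀ g1]
    have hc4 : 0 < 4 * π ^ 2 * ε * (k:ℝ) := by positivity
    nlinarith [mul_lt_mul_of_pos_left g2 hc4]
  · rw [div_lt_iff₀ g1]
    have h2pi : 0 < 2 * π := by positivity
    nlinarith [mul_lt_mul_of_pos_left g3 h2pi]
end

section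
/- For every real ε > 0 and every positive integer k, writing K_j = K_j(πεk) for j = 0, 1, 2, the quantity λⁿ = 2π²εk·(4K₁²K₂ + πεk·K₁·(K₁² − K₀K₂)) / (2K₀K₁K₂ + πεk·(K₁²(K₀ + K₂) − 2K₀²K₂)) satisfies the growth bounds 3π²εk < λⁿ < 3π²εk + 3π. -/
open Real

section StokesAux

open MeasureTheory Set Filter Topology

noncomputable def Iz (z : ℝ) (n : ℕ) : ℝ :=
  ∫ t in Set.Ioi (0 : ℝ), Real.exp (-z * Real.cosh t) * Real.cosh t ^ n

lemma one_add_sq_le_cosh (t : ℝ) (ht : 0 ≤ t) : 1 + t ^ 2 / 2 ≤ Real.cosh t := by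
  have h := Real.cosh_two_mul (t / 2)
  have h2 : (2 : ℝ) * (t / 2) = t := by ring
  rw [h2] at h
  have hs : t / 2 ≤ Real.sinh (t / 2) := Real.self_le_sinh_iff.mpr (by linarith)
  have hsq := Real.cosh_sq (t / 2)
  have h0 : (0 : ℝ) ≤ t / 2 := by linarith
  have hmul : t / 2 * (t / 2) ≤ Real.sinh (t / 2) * Real.sinh (t / 2) :=
    mul_le_mul hs hs h0 (le_trans h0 hs)
  nlinarith

lemma cosh_le_exp' (t : ℝ) (ht : 0 ≤ t) : Real.cosh t ≤ Real.exp t := by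
  have h := Real.cosh_add_sinh t
  have := Real.sinh_nonneg_iff.mpr ht
  linarith

lemma integrableOn_aux {z : ℝ} (hz : 0 < z) (n : ℕ) :
    IntegrableOn (fun t => Real.exp (-z * Real.cosh t) * Real.cosh t ^ n) (Set.Ioi 0) := by
  apply integrable_of_isBigO_exp_neg (b := 1) one_pos
  · exact ((Real.continuous_exp.comp (continuous_const.mul Real.continuous_cosh)).mul
      (Real.continuous_cosh.pow n)).continuousOn
  · apply Asymptotics.IsBigO.of_bound 1
    filter_upwards [eventually_ge_atTop (max 1 (2 * ((n : ℝ) + 1) / z))] with t ht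
    have ht1 : (1 : ℝ) ≤ t := le_trans (le_max_left _ _) ht
    have ht2 : 2 * ((n : ℝ) + 1) / z ≤ t := le_trans (le_max_right _ _) ht
    have ht0 : (0 : ℝ) ≤ t := by linarith
    have hzt : 2 * ((n : ℝ) + 1) ≤ z * t := by
      rw [div_le_iff₀ hz] at ht2; linarith [ht2]
    have hcexp : Real.cosh t ≤ Real.exp t := cosh_le_exp' t ht0
    have h1 : Real.cosh t ^ n ≤ Real.exp (n * t) := by
      calc Real.cosh t ^ n ≤ Real.exp t ^ n :=
            pow_le_pow_left₀ (Real.cosh_pos t).le hcexp n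
        _ = Real.exp (n * t) := by rw [← Real.exp_nat_mul]
    have h2 : Real.exp (-z * Real.cosh t) ≤ Real.exp (-z * (1 + t ^ 2 / 2)) := by
      apply Real.exp_le_exp.2
      have := one_add_sq_le_cosh t ht0
      nlinarith
    have key : Real.exp (-z * Real.cosh t) * Real.cosh t ^ n ≤ Real.exp (-t) := by
      calc Real.exp (-z * Real.cosh t) * Real.cosh t ^ n
          ≤ Real.exp (-z * (1 + t ^ 2 / 2)) * Real.exp (n * t) :=
            mul_le_mul h2 h1 (pow_nonneg (Real.cosh_pos t).le n) (Real.exp_nonneg _)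
        _ = Real.exp (-z * (1 + t ^ 2 / 2) + n * t) := by rw [← Real.exp_add]
        _ ≤ Real.exp (-t) := by
            apply Real.exp_le_exp.2
            have hq : ((n : ℝ) + 1) * t ≤ z * t * t / 2 := by nlinarith
            nlinarith
    rw [Real.norm_eq_abs, Real.norm_eq_abs, abs_of_nonneg (by positivity),
      abs_of_nonneg (Real.exp_nonneg _), one_mul, neg_one_mul]
    exact key

lemma tendsto_exp_mul_aux {z : ℝ} (hz : 0 < z) (n : ℕ) :
    Tendsto (fun t => Real.exp ((n : ℝ) * t - z * Real.cosh t)) atTop (𝓝 0) := by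
  apply Real.tendsto_exp_atBot.comp
  have hquad : Tendsto (fun t : ℝ => (n : ℝ) - z * t / 2) atTop atBot := by
    have h1 : Tendsto (fun t : ℝ => t * (z / 2)) atTop atTop :=
      Tendsto.atTop_mul_const (by positivity) tendsto_id
    have h2 : Tendsto (fun t : ℝ => -(t * (z / 2)) + n) atTop atBot :=
      tendsto_atBot_add_const_right _ _ (tendsto_neg_atTop_atBot.comp h1)
    have e : (fun t : ℝ => (n : ℝ) - z * t / 2) = fun t : ℝ => -(t * (z / 2)) + n := by
      funext t; ring
    rw [e]; exact h2
  have hq2 : Tendsto (fun t : ℝ => t * ((n : ℝ) - z * t / 2) + (-z)) atTop atBot :=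
    tendsto_atBot_add_const_right _ _ (Tendsto.atTop_mul_atBot₀ tendsto_id hquad)
  apply tendsto_atBot_mono' atTop ?_ hq2
  filter_upwards [eventually_ge_atTop (0 : ℝ)] with t ht
  have := one_add_sq_le_cosh t ht
  nlinarith

lemma tendsto_F1 {z : ℝ} (hz : 0 < z) :
    Tendsto (fun t => Real.exp (-z * Real.cosh t) * Real.sinh t) atTop (𝓝 0) := by
  apply tendsto_of_tendsto_of_tendsto_of_le_of_le' tendsto_const_nhds
    (tendsto_exp_mul_aux hz 1)
  · filter_upwards [eventually_ge_atTop (0 : ℝ)] with t ht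
    exact mul_nonneg (Real.exp_nonneg _) (Real.sinh_nonneg_iff.mpr ht)
  · filter_upwards [eventually_ge_atTop (0 : ℝ)] with t ht
    have hs : Real.sinh t ≤ Real.exp t := by
      have := Real.sinh_add_cosh t
      have := Real.cosh_pos t
      linarith
    calc Real.exp (-z * Real.cosh t) * Real.sinh t
        ≤ Real.exp (-z * Real.cosh t) * Real.exp t :=
          mul_le_mul_of_nonneg_left hs (Real.exp_nonneg _)
      _ = Real.exp (((1 : ℕ) : ℝ) * t - z * Real.cosh t) := by
          rw [← Real.exp_add]; norm_num; ring_nf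

lemma tendsto_F2 {z : ℝ} (hz : 0 < z) :
    Tendsto (fun t => Real.exp (-z * Real.cosh t) * (Real.sinh t * (Real.cosh t - 1)))
      atTop (𝓝 0) := by
  apply tendsto_of_tendsto_of_tendsto_of_le_of_le' tendsto_const_nhds
    (tendsto_exp_mul_aux hz 2)
  · filter_upwards [eventually_ge_atTop (0 : ℝ)] with t ht
    have h1 := Real.sinh_nonneg_iff.mpr ht
    have h2 := Real.one_le_cosh t
    exact mul_nonneg (Real.exp_nonneg _) (mul_nonneg h1 (by linarith))
  · filter_upwards [eventually_ge_atTop (0 : ℝ)] with t ht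
    have hs : Real.sinh t ≤ Real.exp t := by
      have := Real.sinh_add_cosh t
      have := Real.cosh_pos t
      linarith
    have hc : Real.cosh t - 1 ≤ Real.exp t := by
      have := cosh_le_exp' t ht
      linarith [Real.exp_pos t]
    have h1 := Real.sinh_nonneg_iff.mpr ht
    have h2 := Real.one_le_cosh t
    calc Real.exp (-z * Real.cosh t) * (Real.sinh t * (Real.cosh t - 1))
        ≤ Real.exp (-z * Real.cosh t) * (Real.exp t * Real.exp t) := by
          apply mul_le_mul_of_nonneg_left _ (Real.exp_nonneg _)
          exact mul_le_mul hs hc (by linarith) (Real.exp_nonneg _)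
      _ = Real.exp (((2 : ℕ) : ℝ) * t - z * Real.cosh t) := by
          rw [← Real.exp_add, ← Real.exp_add]; norm_num; ring_nf

lemma ibp1 {z : ℝ} (hz : 0 < z) : Iz z 1 = z * (Iz z 2 - Iz z 0) := by
  have i1 := integrableOn_aux hz 1
  have i2 := integrableOn_aux hz 2
  have i0 := integrableOn_aux hz 0
  have i20 : IntegrableOn (fun x => z * (Real.exp (-z * Real.cosh x) * Real.cosh x ^ 2 -
      Real.exp (-z * Real.cosh x) * Real.cosh x ^ 0)) (Ioi 0) := by
    exact (i2.sub i0).const_mul z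
  have hder : ∀ x ∈ Ici (0 : ℝ),
      HasDerivAt (fun t => Real.exp (-z * Real.cosh t) * Real.sinh t)
        (Real.exp (-z * Real.cosh x) * Real.cosh x ^ 1 -
          z * (Real.exp (-z * Real.cosh x) * Real.cosh x ^ 2 -
            Real.exp (-z * Real.cosh x) * Real.cosh x ^ 0)) x := by
    intro x _
    have h := (((Real.hasDerivAt_cosh x).const_mul (-z)).exp).fun_mul (Real.hasDerivAt_sinh x)
    refine h.congr_deriv (Eq.symm ?_)
    have hs := Real.sinh_sq x
    simp only [pow_zero, pow_one]
    linear_combination (z * Real.exp (-z * Real.cosh x)) * hs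
  have hint : IntegrableOn (fun x => Real.exp (-z * Real.cosh x) * Real.cosh x ^ 1 -
          z * (Real.exp (-z * Real.cosh x) * Real.cosh x ^ 2 -
            Real.exp (-z * Real.cosh x) * Real.cosh x ^ 0)) (Ioi 0) := by
    exact i1.sub i20
  have h0 := MeasureTheory.integral_Ioi_of_hasDerivAt_of_tendsto' hder hint (tendsto_F1 hz)
  simp only [Real.sinh_zero, mul_zero, zero_sub, neg_zero] at h0
  rw [MeasureTheory.integral_sub i1 i20, MeasureTheory.integral_const_mul,
    MeasureTheory.integral_sub i2 i0] at h0
  simp only [Iz]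
  linarith [h0]

lemma ibp2 {z : ℝ} (hz : 0 < z) :
    2 * Iz z 2 - Iz z 1 - Iz z 0 = z * (Iz z 3 - Iz z 2 - Iz z 1 + Iz z 0) := by
  have i0 := integrableOn_aux hz 0
  have i1 := integrableOn_aux hz 1
  have i2 := integrableOn_aux hz 2
  have i3 := integrableOn_aux hz 3
  have iA : IntegrableOn (fun x => 2 * (Real.exp (-z * Real.cosh x) * Real.cosh x ^ 2) -
      Real.exp (-z * Real.cosh x) * Real.cosh x ^ 1 -
      Real.exp (-z * Real.cosh x) * Real.cosh x ^ 0) (Ioi 0) := by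
    exact ((i2.const_mul 2).sub i1).sub i0
  have iB : IntegrableOn (fun x => z * (Real.exp (-z * Real.cosh x) * Real.cosh x ^ 3 -
      Real.exp (-z * Real.cosh x) * Real.cosh x ^ 2 -
      Real.exp (-z * Real.cosh x) * Real.cosh x ^ 1 +
      Real.exp (-z * Real.cosh x) * Real.cosh x ^ 0)) (Ioi 0) := by
    exact (((i3.sub i2).sub i1).add i0).const_mul z
  have hder : ∀ x ∈ Ici (0 : ℝ),
      HasDerivAt (fun t => Real.exp (-z * Real.cosh t) * (Real.sinh t * (Real.cosh t - 1)))
        ((2 * (Real.exp (-z * Real.cosh x) * Real.cosh x ^ 2) -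
          Real.exp (-z * Real.cosh x) * Real.cosh x ^ 1 -
          Real.exp (-z * Real.cosh x) * Real.cosh x ^ 0) -
          z * (Real.exp (-z * Real.cosh x) * Real.cosh x ^ 3 -
          Real.exp (-z * Real.cosh x) * Real.cosh x ^ 2 -
          Real.exp (-z * Real.cosh x) * Real.cosh x ^ 1 +
          Real.exp (-z * Real.cosh x) * Real.cosh x ^ 0)) x := by
    intro x _
    have h := (((Real.hasDerivAt_cosh x).const_mul (-z)).exp).fun_mul
      ((Real.hasDerivAt_sinh x).fun_mul ((Real.hasDerivAt_cosh x).sub_const 1))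
    refine h.congr_deriv (Eq.symm ?_)
    have hs := Real.sinh_sq x
    simp only [pow_zero, pow_one]
    linear_combination (Real.exp (-z * Real.cosh x) * (z * Real.cosh x - z - 1)) * hs
  have hint : IntegrableOn (fun x =>
      (2 * (Real.exp (-z * Real.cosh x) * Real.cosh x ^ 2) -
        Real.exp (-z * Real.cosh x) * Real.cosh x ^ 1 -
        Real.exp (-z * Real.cosh x) * Real.cosh x ^ 0) -
        z * (Real.exp (-z * Real.cosh x) * Real.cosh x ^ 3 -
        Real.exp (-z * Real.cosh x) * Real.cosh x ^ 2 -
        Real.exp (-z * Real.cosh x) * Real.cosh x ^ 1 +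
        Real.exp (-z * Real.cosh x) * Real.cosh x ^ 0)) (Ioi 0) := by
    exact iA.sub iB
  have h0 := MeasureTheory.integral_Ioi_of_hasDerivAt_of_tendsto' hder hint (tendsto_F2 hz)
  simp only [Real.sinh_zero, Real.cosh_zero, zero_mul, mul_zero, zero_sub, neg_zero] at h0
  have i2' : IntegrableOn (fun x => 2 * (Real.exp (-z * Real.cosh x) * Real.cosh x ^ 2)) (Ioi 0) :=
    i2.const_mul 2
  have iA1 : IntegrableOn (fun x => 2 * (Real.exp (-z * Real.cosh x) * Real.cosh x ^ 2) -
      Real.exp (-z * Real.cosh x) * Real.cosh x ^ 1) (Ioi 0) := i2'.sub i1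
  have i32 : IntegrableOn (fun x => Real.exp (-z * Real.cosh x) * Real.cosh x ^ 3 -
      Real.exp (-z * Real.cosh x) * Real.cosh x ^ 2) (Ioi 0) := i3.sub i2
  have i321 : IntegrableOn (fun x => Real.exp (-z * Real.cosh x) * Real.cosh x ^ 3 -
      Real.exp (-z * Real.cosh x) * Real.cosh x ^ 2 -
      Real.exp (-z * Real.cosh x) * Real.cosh x ^ 1) (Ioi 0) := i32.sub i1
  rw [MeasureTheory.integral_sub iA iB, MeasureTheory.integral_const_mul,
    MeasureTheory.integral_sub iA1 i0,
    MeasureTheory.integral_sub i2' i1,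
    MeasureTheory.integral_const_mul,
    MeasureTheory.integral_add i321 i0,
    MeasureTheory.integral_sub i32 i1,
    MeasureTheory.integral_sub i3 i2] at h0
  simp only [Iz]
  linarith [h0]

lemma Iz_pos {z : ℝ} (hz : 0 < z) : 0 < Iz z 0 := by
  rw [Iz, MeasureTheory.setIntegral_pos_iff_support_of_nonneg_ae
    (Filter.Eventually.of_forall fun t => by positivity) (integrableOn_aux hz 0)]
  have hsupp : (Function.support fun t : ℝ =>
      Real.exp (-z * Real.cosh t) * Real.cosh t ^ 0) ∩ Ioi 0 = Ioi 0 := by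
    apply Set.inter_eq_right.mpr
    intro t _
    have : Real.exp (-z * Real.cosh t) * Real.cosh t ^ 0 ≠ 0 := by positivity
    exact this
  rw [hsupp, Real.volume_Ioi]
  simp

lemma comb_nonneg {z : ℝ} (hz : 0 < z) (c0 c1 c2 c3 : ℝ)
    (h : ∀ t : ℝ, 0 ≤ t → 0 ≤ c0 + c1 * Real.cosh t + c2 * Real.cosh t ^ 2
      + c3 * Real.cosh t ^ 3) :
    0 ≤ c0 * Iz z 0 + c1 * Iz z 1 + c2 * Iz z 2 + c3 * Iz z 3 := by
  have j0 : IntegrableOn (fun t => c0 * (Real.exp (-z * Real.cosh t) * Real.cosh t ^ 0))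
      (Ioi 0) := (integrableOn_aux hz 0).const_mul c0
  have j1 : IntegrableOn (fun t => c1 * (Real.exp (-z * Real.cosh t) * Real.cosh t ^ 1))
      (Ioi 0) := (integrableOn_aux hz 1).const_mul c1
  have j2 : IntegrableOn (fun t => c2 * (Real.exp (-z * Real.cosh t) * Real.cosh t ^ 2))
      (Ioi 0) := (integrableOn_aux hz 2).const_mul c2
  have j3 : IntegrableOn (fun t => c3 * (Real.exp (-z * Real.cosh t) * Real.cosh t ^ 3))
      (Ioi 0) := (integrableOn_aux hz 3).const_mul c3
  have j01 : IntegrableOn (fun t => c0 * (Real.exp (-z * Real.cosh t) * Real.cosh t ^ 0)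
      + c1 * (Real.exp (-z * Real.cosh t) * Real.cosh t ^ 1)) (Ioi 0) := j0.add j1
  have j012 : IntegrableOn (fun t => c0 * (Real.exp (-z * Real.cosh t) * Real.cosh t ^ 0)
      + c1 * (Real.exp (-z * Real.cosh t) * Real.cosh t ^ 1)
      + c2 * (Real.exp (-z * Real.cosh t) * Real.cosh t ^ 2)) (Ioi 0) := j01.add j2
  have key : 0 ≤ ∫ t in Ioi (0:ℝ),
      (c0 * (Real.exp (-z * Real.cosh t) * Real.cosh t ^ 0)
      + c1 * (Real.exp (-z * Real.cosh t) * Real.cosh t ^ 1)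
      + c2 * (Real.exp (-z * Real.cosh t) * Real.cosh t ^ 2)
      + c3 * (Real.exp (-z * Real.cosh t) * Real.cosh t ^ 3)) := by
    apply MeasureTheory.setIntegral_nonneg measurableSet_Ioi
    intro t ht
    have h1 := h t (le_of_lt ht)
    have h2 : (0:ℝ) ≤ Real.exp (-z * Real.cosh t) *
        (c0 + c1 * Real.cosh t + c2 * Real.cosh t ^ 2 + c3 * Real.cosh t ^ 3) :=
      mul_nonneg (Real.exp_nonneg _) h1
    nlinarith [h2]
  rw [MeasureTheory.integral_add j012 j3, MeasureTheory.integral_add j01 j2,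
    MeasureTheory.integral_add j0 j1, MeasureTheory.integral_const_mul,
    MeasureTheory.integral_const_mul, MeasureTheory.integral_const_mul,
    MeasureTheory.integral_const_mul] at key
  simpa [Iz] using key

lemma besselK_zero_eq_s5 (z : ℝ) : besselK 0 z = Iz z 0 := by
  simp only [besselK, Iz, Nat.cast_zero, zero_mul, Real.cosh_zero, pow_zero]

lemma besselK_one_eq_s5 (z : ℝ) : besselK 1 z = Iz z 1 := by
  simp only [besselK, Iz, Nat.cast_one, one_mul, pow_one]

lemma besselK_two_eq {z : ℝ} (hz : 0 < z) : besselK 2 z = 2 * Iz z 2 - Iz z 0 := by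
  have i2' : IntegrableOn (fun x => 2 * (Real.exp (-z * Real.cosh x) * Real.cosh x ^ 2))
      (Ioi 0) := (integrableOn_aux hz 2).const_mul 2
  have e : (fun t : ℝ => Real.exp (-z * Real.cosh t) * Real.cosh (((2:ℕ) : ℝ) * t))
      = fun t => 2 * (Real.exp (-z * Real.cosh t) * Real.cosh t ^ 2)
        - Real.exp (-z * Real.cosh t) * Real.cosh t ^ 0 := by
    funext t
    have h1 : ((2:ℕ) : ℝ) * t = 2 * t := by norm_num
    rw [h1, Real.cosh_two_mul, Real.sinh_sq]
    ring
  rw [besselK, e, MeasureTheory.integral_sub i2' (integrableOn_aux hz 0),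
    MeasureTheory.integral_const_mul]
  rfl

lemma bessel_facts {z : ℝ} (hz : 0 < z) :
    0 < besselK 0 z ∧ besselK 0 z ≤ besselK 1 z ∧
    z * besselK 2 z = z * besselK 0 z + 2 * besselK 1 z ∧
    2 * z * (besselK 1 z - besselK 0 z) ≤ besselK 1 z ∧
    (2 * z - 2) * besselK 1 z ≤ z * (4 * z - 1) * (besselK 1 z - besselK 0 z) ∧
    z * (besselK 1 z ^ 2 - besselK 0 z ^ 2) ≤ besselK 0 z * besselK 1 z := by
  set a := Iz z 0 with ha_def
  set b := Iz z 1 with hb_def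
  set S := Iz z 2 with hS_def
  set T := Iz z 3 with hT_def
  have ha : 0 < a := Iz_pos hz
  have comb2 : 0 ≤ (-1) * a + 1 * b + 0 * S + 0 * T := by
    apply comb_nonneg hz
    intro t ht
    have := Real.one_le_cosh t
    nlinarith
  have comb3 : 0 ≤ 1 * a + (-2) * b + 1 * S + 0 * T := by
    apply comb_nonneg hz
    intro t ht
    nlinarith [sq_nonneg (Real.cosh t - 1)]
  have comb4 : 0 ≤ (-1) * a + 3 * b + (-3) * S + 1 * T := by
    apply comb_nonneg hz
    intro t ht
    nlinarith [mul_nonneg (sq_nonneg (Real.cosh t - 1)) (sub_nonneg.2 (Real.one_le_cosh t))]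
  have comb5 : 0 ≤ (b^2) * a + (-(2*a*b)) * b + (a^2) * S + 0 * T := by
    apply comb_nonneg hz
    intro t ht
    nlinarith [sq_nonneg (b - a * Real.cosh t)]
  have hS1 : z * S = b + z * a := by have := ibp1 hz; nlinarith [this]
  have hab : a ≤ b := by linarith
  have hA : 2 * z * (b - a) ≤ b := by
    have h3 := mul_nonneg hz.le comb3
    nlinarith [h3, hS1]
  have h6 : 2 * z * (S - 2*b + a) ≤ 2*S - b - a := by
    have h4 := mul_nonneg hz.le comb4
    nlinarith [ibp2 hz, h4]
  have h7 := mul_le_mul_of_nonneg_left h6 hz.le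
  have hS2 : z * (z * S) = z * (b + z * a) := by rw [hS1]
  have hB : (2 * z - 2) * b ≤ z * (4 * z - 1) * (b - a) := by nlinarith [h7, hS1, hS2]
  have h8 : a * b^2 ≤ a^2 * S := by nlinarith [comb5]
  have h9 := mul_le_mul_of_nonneg_left h8 hz.le
  have hS3 : a^2 * (z * S) = a^2 * (b + z * a) := by rw [hS1]
  have hC : z * (b^2 - a^2) ≤ a * b := by
    have h10 : a * (z * (b^2 - a^2)) ≤ a * (a * b) := by nlinarith [h9, hS3]
    exact (mul_le_mul_iff_right₀ ha).mp h10
  have hK0 := besselK_zero_eq_s5 z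
  have hK1 := besselK_one_eq_s5 z
  have hK2 := besselK_two_eq hz
  rw [hK0, hK1, hK2]
  refine ⟨ha, hab, ?_, hA, hB, hC⟩
  · rw [← hS_def, ← ha_def, ← hb_def]
    nlinarith [hS1]

-- polynomial lemma, lower bound (a,b form, proven earlier)
lemma polyG (z a b : ℝ) (hz : 0 < z) (ha : 0 < a) (hab : a ≤ b)
    (hA : 2*z*(b-a) ≤ b) :
    3*(4*a*b^2 + 2*z*(b^2-a^2)*(z*a+b)) < 2*(8*b^3 + 2*a*b^2*z + z^2*b*(b^2-a^2)) := by
  have hb : 0 < b := lt_of_lt_of_le ha hab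
  have hA' : 0 ≤ b - 2*z*(b-a) := by linarith
  have hba : 0 ≤ b - a := by linarith
  nlinarith [mul_nonneg hA' hba, mul_nonneg (mul_nonneg hA' hba) hb.le,
    mul_nonneg (mul_nonneg hA' hz.le) (sq_nonneg (b-a)),
    mul_nonneg (mul_nonneg hA' hz.le) (sq_nonneg b),
    mul_nonneg (mul_nonneg hA' hz.le) (mul_nonneg hb.le hba),
    mul_nonneg (mul_nonneg hA' hz.le) (mul_nonneg hb.le ha.le),
    mul_nonneg (mul_nonneg hA' hba) hba,
    sq_nonneg (b - 2*z*(b-a)), mul_pos hz hz,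
    mul_nonneg (mul_nonneg hba ha.le) hb.le, mul_pos (mul_pos hb hb) hb,
    mul_nonneg (sq_nonneg (b - 2*z*(b-a))) hb.le]

-- polynomial lemma, upper bound (u form)
set_option maxHeartbeats 1000000 in
lemma polyH (z u : ℝ) (hz : 0 < z) (hu : 0 ≤ u) (hu1 : u ≤ 1)
    (hA : 2*z*u ≤ 1) (hB : 2*z-2 ≤ z*(4*z-1)*u) (hC : z*u*(2-u) ≤ 1-u) :
    2*z*(z^2*u*(2-u) + 2*z*(1-u) + 8) <
      (3*z+3)*(2*z*u*(2-u)*(z*(1-u)+1) + 4*(1-u)) := by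
  nlinarith [mul_nonneg (sub_nonneg.2 hA) (sub_nonneg.2 hB),
    mul_nonneg (sub_nonneg.2 hA) (sub_nonneg.2 hC),
    mul_nonneg (sub_nonneg.2 hB) (sub_nonneg.2 hC),
    mul_nonneg (mul_nonneg hz.le hu) (sub_nonneg.2 hC),
    mul_nonneg (mul_nonneg hz.le hz.le) (sub_nonneg.2 hC),
    mul_nonneg hz.le (sub_nonneg.2 hB),
    mul_nonneg hu (sub_nonneg.2 hB),
    mul_nonneg (sub_nonneg.2 hu1) (sub_nonneg.2 hB),
    mul_nonneg (sub_nonneg.2 hu1) (sub_nonneg.2 hC),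
    mul_pos hz hz, sq_nonneg (1-2*z*u), sq_nonneg u, sq_nonneg (1-u)]

lemma polyH' (z a b : ℝ) (hz : 0 < z) (ha : 0 < a) (hab : a ≤ b)
    (hA : 2*z*(b-a) ≤ b) (hB : (2*z-2)*b ≤ z*(4*z-1)*(b-a))
    (hC : z*(b^2-a^2) ≤ a*b) :
    2*z*(8*b^3 + 2*a*b^2*z + z^2*b*(b^2-a^2)) <
      (3*z+3)*(4*a*b^2 + 2*z*(b^2-a^2)*(z*a+b)) := by
  have hb : 0 < b := lt_of_lt_of_le ha hab
  set u : ℝ := (b - a) / b with hu_def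
  have hbne : b ≠ 0 := ne_of_gt hb
  have hu : 0 ≤ u := div_nonneg (by linarith) hb.le
  have hu1 : u ≤ 1 := by rw [hu_def, div_le_one hb]; linarith
  have huA : 2*z*u ≤ 1 := by
    rw [hu_def]
    rw [show 2*z*((b-a)/b) = 2*z*(b-a)/b by ring, div_le_one hb]
    exact hA
  have huB : 2*z-2 ≤ z*(4*z-1)*u := by
    rw [hu_def, show z*(4*z-1)*((b-a)/b) = z*(4*z-1)*(b-a)/b by ring, le_div_iff₀ hb]
    exact hB
  have huC : z*u*(2-u) ≤ 1-u := by
    have e1 : z*u*(2-u) = z*(b^2-a^2)/b^2 := by rw [hu_def]; field_simp; ring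
    have e2 : 1-u = a/b := by rw [hu_def]; field_simp; ring
    rw [e1, e2, div_le_div_iff₀ (by positivity) hb]
    nlinarith [mul_le_mul_of_nonneg_right hC hb.le]
  have hg := polyH z u hz hu hu1 huA huB huC
  have eN : 8*b^3 + 2*a*b^2*z + z^2*b*(b^2-a^2)
      = b^3 * (z^2*u*(2-u) + 2*z*(1-u) + 8) := by
    rw [hu_def]; field_simp; ring
  have eD : 4*a*b^2 + 2*z*(b^2-a^2)*(z*a+b)
      = b^3 * (2*z*u*(2-u)*(z*(1-u)+1) + 4*(1-u)) := by
    rw [hu_def]; field_simp; ring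
  rw [eN, eD]
  have hb3 : (0:ℝ) < b^3 := by positivity
  nlinarith [mul_lt_mul_of_pos_left hg hb3]

lemma final_lemma (p z a b c : ℝ) (hp : 0 < p) (hz : 0 < z) (ha : 0 < a) (hab : a ≤ b)
    (hc : z * c = z * a + 2 * b)
    (hA : 2*z*(b-a) ≤ b) (hB : (2*z-2)*b ≤ z*(4*z-1)*(b-a))
    (hC : z*(b^2-a^2) ≤ a*b) :
    3 * p * z < 2 * p * z * ((4 * b ^ 2 * c + z * b * (b ^ 2 - a * c)) /
        (2 * a * b * c + z * (b ^ 2 * (a + c) - 2 * a ^ 2 * c))) ∧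
    2 * p * z * ((4 * b ^ 2 * c + z * b * (b ^ 2 - a * c)) /
        (2 * a * b * c + z * (b ^ 2 * (a + c) - 2 * a ^ 2 * c))) < 3 * p * z + 3 * p := by
  have hb : 0 < b := lt_of_lt_of_le ha hab
  have e_D : z * (2 * a * b * c + z * (b ^ 2 * (a + c) - 2 * a ^ 2 * c))
      = 4*a*b^2 + 2*z*(b^2-a^2)*(z*a+b) := by
    linear_combination (2*a*b + z*b^2 - 2*z*a^2) * hc
  have e_N : z * (4 * b ^ 2 * c + z * b * (b ^ 2 - a * c))
      = 8*b^3 + 2*a*b^2*z + z^2*b*(b^2-a^2) := by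
    linear_combination (4*b^2 - z*a*b) * hc
  have hDz : 0 < 4*a*b^2 + 2*z*(b^2-a^2)*(z*a+b) := by
    nlinarith [mul_pos (mul_pos ha hb) hb, mul_nonneg (mul_nonneg hz.le
      (mul_nonneg (sub_nonneg.2 hab) (by linarith : (0:ℝ) ≤ b + a)))
      (by nlinarith : (0:ℝ) ≤ z*a + b)]
  have hD : 0 < 2 * a * b * c + z * (b ^ 2 * (a + c) - 2 * a ^ 2 * c) := by
    have h0 : 0 < z * (2 * a * b * c + z * (b ^ 2 * (a + c) - 2 * a ^ 2 * c)) := by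
      rw [e_D]; exact hDz
    nlinarith [h0]
  have hg1 := polyG z a b hz ha hab hA
  have hg2 := polyH' z a b hz ha hab hA hB hC
  constructor
  · rw [show 2 * p * z * ((4 * b ^ 2 * c + z * b * (b ^ 2 - a * c)) /
        (2 * a * b * c + z * (b ^ 2 * (a + c) - 2 * a ^ 2 * c)))
      = (2 * p * z * (4 * b ^ 2 * c + z * b * (b ^ 2 - a * c))) /
        (2 * a * b * c + z * (b ^ 2 * (a + c) - 2 * a ^ 2 * c)) from by ring,
      lt_div_iff₀ hD]
    have eDp : p * (z * (2 * a * b * c + z * (b ^ 2 * (a + c) - 2 * a ^ 2 * c)))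
        = p * (4*a*b^2 + 2*z*(b^2-a^2)*(z*a+b)) := by rw [e_D]
    have eNp : p * (z * (4 * b ^ 2 * c + z * b * (b ^ 2 - a * c)))
        = p * (8*b^3 + 2*a*b^2*z + z^2*b*(b^2-a^2)) := by rw [e_N]
    nlinarith [mul_lt_mul_of_pos_left hg1 hp, eDp, eNp]
  · rw [show 2 * p * z * ((4 * b ^ 2 * c + z * b * (b ^ 2 - a * c)) /
        (2 * a * b * c + z * (b ^ 2 * (a + c) - 2 * a ^ 2 * c)))
      = (2 * p * z * (4 * b ^ 2 * c + z * b * (b ^ 2 - a * c))) /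
        (2 * a * b * c + z * (b ^ 2 * (a + c) - 2 * a ^ 2 * c)) from by ring,
      div_lt_iff₀ hD]
    rw [← mul_lt_mul_iff_right₀ hz]
    have eDp : p * (z * (2 * a * b * c + z * (b ^ 2 * (a + c) - 2 * a ^ 2 * c)))
        = p * (4*a*b^2 + 2*z*(b^2-a^2)*(z*a+b)) := by rw [e_D]
    have eDpz : z * (p * (z * (2 * a * b * c + z * (b ^ 2 * (a + c) - 2 * a ^ 2 * c))))
        = z * (p * (4*a*b^2 + 2*z*(b^2-a^2)*(z*a+b))) := by rw [e_D]
    have eNpz : p * (z * (z * (4 * b ^ 2 * c + z * b * (b ^ 2 - a * c))))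
        = p * (z * (8*b^3 + 2*a*b^2*z + z^2*b*(b^2-a^2))) := by rw [e_N]
    nlinarith [mul_lt_mul_of_pos_left hg2 hp, eDp, eDpz, eNpz]

end StokesAux

theorem stokes_normal_eigenvalue_growth (ε : ℝ) (hε : 0 < ε) (k : ℕ) (hk : 1 ≤ k) :
    3 * π ^ 2 * ε * (k : ℝ) <
      2 * π ^ 2 * ε * (k : ℝ) *
        ((4 * (besselK 1 (π * ε * (k : ℝ))) ^ 2 * besselK 2 (π * ε * (k : ℝ)) +
            π * ε * (k : ℝ) * besselK 1 (π * ε * (k : ℝ)) *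
              ((besselK 1 (π * ε * (k : ℝ))) ^ 2 -
                besselK 0 (π * ε * (k : ℝ)) * besselK 2 (π * ε * (k : ℝ)))) /
          (2 * besselK 0 (π * ε * (k : ℝ)) * besselK 1 (π * ε * (k : ℝ)) *
              besselK 2 (π * ε * (k : ℝ)) +
            π * ε * (k : ℝ) *
              ((besselK 1 (π * ε * (k : ℝ))) ^ 2 *
                  (besselK 0 (π * ε * (k : ℝ)) + besselK 2 (π * ε * (k : ℝ))) -
                2 * (besselK 0 (π * ε * (k : ℝ))) ^ 2 * besselK 2 (π * ε * (k : ℝ))))) ∧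
    2 * π ^ 2 * ε * (k : ℝ) *
        ((4 * (besselK 1 (π * ε * (k : ℝ))) ^ 2 * besselK 2 (π * ε * (k : ℝ)) +
            π * ε * (k : ℝ) * besselK 1 (π * ε * (k : ℝ)) *
              ((besselK 1 (π * ε * (k : ℝ))) ^ 2 -
                besselK 0 (π * ε * (k : ℝ)) * besselK 2 (π * ε * (k : ℝ)))) /
          (2 * besselK 0 (π * ε * (k : ℝ)) * besselK 1 (π * ε * (k : ℝ)) *
              besselK 2 (π * ε * (k : ℝ)) +
            π * ε * (k : ℝ) *
              ((besselK 1 (π * ε * (k : ℝ))) ^ 2 *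
                  (besselK 0 (π * ε * (k : ℝ)) + besselK 2 (π * ε * (k : ℝ))) -
                2 * (besselK 0 (π * ε * (k : ℝ))) ^ 2 * besselK 2 (π * ε * (k : ℝ))))) <
      3 * π ^ 2 * ε * (k : ℝ) + 3 * π := by
  have hk1 : (1 : ℝ) ≤ (k : ℝ) := by exact_mod_cast hk
  have hz : 0 < π * ε * (k : ℝ) :=
    mul_pos (mul_pos Real.pi_pos hε) (by linarith)
  obtain ⟨ha, hab, hc, hA, hB, hC⟩ := bessel_facts hz
  have H := final_lemma π (π * ε * (k : ℝ)) (besselK 0 (π * ε * (k : ℝ)))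
    (besselK 1 (π * ε * (k : ℝ))) (besselK 2 (π * ε * (k : ℝ)))
    Real.pi_pos hz ha hab hc hA hB hC
  have e2 : 2 * π * (π * ε * (k : ℝ)) = 2 * π ^ 2 * ε * (k : ℝ) := by ring
  have e3 : 3 * π * (π * ε * (k : ℝ)) = 3 * π ^ 2 * ε * (k : ℝ) := by ring
  rw [e2, e3] at H
  exact H
end

section
/- For every real z > 0, the function h(z) = (z/8)·[4z⁴K₀⁶ − 16z³K₀⁵K₁ − z²(120 + 11z²)K₀⁴K₁² + 4z(−40 + 3z²)K₀³K₁³ + 2(−16 + 66z² + 5z⁴)K₀²K₁⁴ + 4z(32 + z²)K₀K₁⁵ − 3z²(8 + z²)K₁⁶] / (z²K₀³ + zK₀²K₁ − (2 + z²)K₀K₁² − zK₁³)², where K_j = K_j(z), satisfies |h(z)| < (9/8)·z. -/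
open Real

/-- The inhomogeneous term in the Riccati-type ODE satisfied by the function encoding the
normal-direction eigenvalues of the Stokes slender-body PDE. -/
noncomputable def hfun (z : ℝ) : ℝ :=
  (z / 8) *
    (4 * z ^ 4 * (besselK 0 z) ^ 6 - 16 * z ^ 3 * (besselK 0 z) ^ 5 * besselK 1 z -
        z ^ 2 * (120 + 11 * z ^ 2) * (besselK 0 z) ^ 4 * (besselK 1 z) ^ 2 +
        4 * z * (-40 + 3 * z ^ 2) * (besselK 0 z) ^ 3 * (besselK 1 z) ^ 3 +
        2 * (-16 + 66 * z ^ 2 + 5 * z ^ 4) * (besselK 0 z) ^ 2 * (besselK 1 z) ^ 4 +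
        4 * z * (32 + z ^ 2) * besselK 0 z * (besselK 1 z) ^ 5 -
        3 * z ^ 2 * (8 + z ^ 2) * (besselK 1 z) ^ 6) /
    (z ^ 2 * (besselK 0 z) ^ 3 + z * (besselK 0 z) ^ 2 * besselK 1 z -
        (2 + z ^ 2) * besselK 0 z * (besselK 1 z) ^ 2 - z * (besselK 1 z) ^ 3) ^ 2

open MeasureTheory Set Filter

open Real MeasureTheory Set Filter

-- central pointwise bound
lemma exp_cosh_bound {z : ℝ} (hz : 0 < z) {t : ℝ} (ht : 0 ≤ t) :
    exp (-z * cosh t) * cosh t ≤ exp (2 / z) * exp (-t) := by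
  have hst : t / 2 ≤ sinh (t / 2) := (Real.self_le_sinh_iff).2 (by linarith)
  have hc : 1 + t ^ 2 / 2 ≤ cosh t := by
    have h1 : cosh (2 * (t / 2)) = cosh (t / 2) ^ 2 + sinh (t / 2) ^ 2 := Real.cosh_two_mul _
    have h2 : cosh (t / 2) ^ 2 = 1 + sinh (t / 2) ^ 2 := Real.cosh_sq' _
    have h3 : (2 : ℝ) * (t / 2) = t := by ring
    rw [h3] at h1
    nlinarith [hst, Real.sinh_nonneg_iff.2 (by linarith : (0:ℝ) ≤ t / 2)]
  have h3 : 2 * t ≤ z * cosh t + 2 / z := by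
    rw [← mul_le_mul_iff_of_pos_right hz]
    have he : (z * cosh t + 2 / z) * z = z * cosh t * z + 2 := by field_simp
    rw [he]
    nlinarith [sq_nonneg (z * t - 2), mul_le_mul_of_nonneg_left hc hz.le, sq_nonneg z]
  have hce : cosh t ≤ exp t := by
    rw [Real.cosh_eq]
    have := Real.exp_le_exp.2 (by linarith : -t ≤ t)
    linarith
  calc exp (-z * cosh t) * cosh t ≤ exp (-z * cosh t) * exp t := by
        exact mul_le_mul_of_nonneg_left hce (Real.exp_pos _).le
    _ = exp (-z * cosh t + t) := by rw [← Real.exp_add]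
    _ ≤ exp (2 / z + -t) := Real.exp_le_exp.2 (by linarith)
    _ = exp (2 / z) * exp (-t) := by rw [Real.exp_add]

-- integrability from the bound
lemma integrableOn_of_bound {f : ℝ → ℝ} {C : ℝ} (hf : Continuous f)
    (hb : ∀ t, 0 ≤ t → |f t| ≤ C * exp (-t)) : IntegrableOn f (Ioi (0:ℝ)) := by
  have hg : IntegrableOn (fun t : ℝ => C * exp (-t)) (Ioi (0:ℝ)) := by
    have := (exp_neg_integrableOn_Ioi 0 (one_pos)).const_mul C
    simp at this; exact this
  refine Integrable.mono hg hf.aestronglyMeasurable.restrict ?_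
  rw [ae_restrict_iff' measurableSet_Ioi]
  refine ae_of_all _ fun t ht => ?_
  have h1 := hb t (le_of_lt ht)
  have h2 : (0:ℝ) ≤ C := by
    by_contra hC
    push_neg at hC
    have := le_trans (abs_nonneg (f 1)) (hb 1 zero_le_one)
    nlinarith [Real.exp_pos (-(1:ℝ))]
  simp only [Real.norm_eq_abs, norm_mul, abs_of_nonneg h2, abs_of_nonneg (Real.exp_pos (-t)).le]
  simpa [abs_mul, abs_of_nonneg h2, abs_of_nonneg (Real.exp_pos (-t)).le] using h1

lemma integral_pos_aux {f : ℝ → ℝ} (hi : IntegrableOn f (Ioi (0:ℝ)))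
    (hpos : ∀ t, 0 < t → 0 < f t) : 0 < ∫ t in Ioi (0:ℝ), f t := by
  have hnn : 0 ≤ᵐ[volume.restrict (Ioi (0:ℝ))] f :=
    (ae_restrict_iff' measurableSet_Ioi).2 (ae_of_all _ fun t ht => (hpos t ht).le)
  rw [setIntegral_pos_iff_support_of_nonneg_ae hnn hi]
  have hsub : Ioi (0:ℝ) ⊆ Function.support f := fun t ht => (hpos t ht).ne'
  have : Function.support f ∩ Ioi (0:ℝ) = Ioi (0:ℝ) := inter_eq_self_of_subset_right hsub
  rw [this, Real.volume_Ioi]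
  exact ENNReal.zero_lt_top

section
variable {z : ℝ}

lemma g0_abs_le (hz : 0 < z) (t : ℝ) (ht : 0 ≤ t) :
    |exp (-z * cosh t)| ≤ exp (2 / z) * exp (-t) := by
  rw [abs_of_pos (Real.exp_pos _)]
  calc exp (-z * cosh t) = exp (-z * cosh t) * 1 := (mul_one _).symm
    _ ≤ exp (-z * cosh t) * cosh t :=
        mul_le_mul_of_nonneg_left (Real.one_le_cosh t) (Real.exp_pos _).le
    _ ≤ _ := exp_cosh_bound hz ht

lemma int_g0 (hz : 0 < z) : IntegrableOn (fun t : ℝ => exp (-z * cosh t)) (Ioi (0:ℝ)) :=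
  integrableOn_of_bound (Real.continuous_exp.comp (continuous_const.mul Real.continuous_cosh))
    (g0_abs_le hz)

lemma int_g1 (hz : 0 < z) :
    IntegrableOn (fun t : ℝ => exp (-z * cosh t) * cosh t) (Ioi (0:ℝ)) :=
  integrableOn_of_bound
    ((Real.continuous_exp.comp (continuous_const.mul Real.continuous_cosh)).mul Real.continuous_cosh)
    (fun t ht => by
      rw [abs_of_nonneg (by positivity)]
      exact exp_cosh_bound hz ht)

lemma int_gc (hz : 0 < z) :
    IntegrableOn (fun t : ℝ => exp (-z * cosh t) * (cosh t - 1)) (Ioi (0:ℝ)) := by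
  have h := (int_g1 hz).sub (int_g0 hz)
  exact h.congr (ae_of_all _ fun t => by simp [Pi.sub_apply]; ring)

lemma int_gs (hz : 0 < z) :
    IntegrableOn (fun t : ℝ => exp (-z * cosh t) * (1 / (cosh t + 1))) (Ioi (0:ℝ)) := by
  refine integrableOn_of_bound (C := exp (2 / z)) ?_ (fun t ht => ?_)
  · exact (Real.continuous_exp.comp (continuous_const.mul Real.continuous_cosh)).mul
      (continuous_const.div (Real.continuous_cosh.add continuous_const) (fun t => by positivity))
  · have h1 : (0:ℝ) < cosh t + 1 := by positivity
    have h2 : 1 / (cosh t + 1) ≤ 1 := by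
      rw [div_le_one h1]; nlinarith [Real.one_le_cosh t]
    rw [abs_of_nonneg (by positivity)]
    calc exp (-z * cosh t) * (1 / (cosh t + 1)) ≤ exp (-z * cosh t) * 1 :=
          mul_le_mul_of_nonneg_left h2 (Real.exp_pos _).le
      _ = |exp (-z * cosh t)| := by rw [mul_one, abs_of_pos (Real.exp_pos _)]
      _ ≤ _ := g0_abs_le hz t ht

lemma int_gq (hz : 0 < z) :
    IntegrableOn (fun t : ℝ =>
      exp (-z * cosh t) * (1 / (cosh t + 1) - z * (cosh t - 1))) (Ioi (0:ℝ)) := by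
  have h := (int_gs hz).sub (((int_gc hz)).const_mul z)
  exact h.congr (ae_of_all _ fun t => by simp [Pi.sub_apply]; ring)

-- the integration by parts identity
lemma ibp (hz : 0 < z) :
    ∫ t in Ioi (0:ℝ), exp (-z * cosh t) * (1 / (cosh t + 1) - z * (cosh t - 1)) = 0 := by
  set F : ℝ → ℝ := fun t => exp (-z * cosh t) * (sinh t / (cosh t + 1)) with hF
  have hderiv : ∀ t : ℝ, HasDerivAt F
      (exp (-z * cosh t) * (1 / (cosh t + 1) - z * (cosh t - 1))) t := by
    intro t
    have hc : cosh t + 1 ≠ 0 := by positivity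
    have h1 : HasDerivAt (fun t : ℝ => -z * cosh t) (-z * sinh t) t :=
      (Real.hasDerivAt_cosh t).const_mul (-z)
    have h2 : HasDerivAt (fun t : ℝ => exp (-z * cosh t))
        (exp (-z * cosh t) * (-z * sinh t)) t := h1.exp
    have h3 : HasDerivAt (fun t : ℝ => sinh t / (cosh t + 1))
        ((cosh t * (cosh t + 1) - sinh t * sinh t) / (cosh t + 1) ^ 2) t :=
      (Real.hasDerivAt_sinh t).div ((Real.hasDerivAt_cosh t).add_const 1) hc
    have hsq : sinh t ^ 2 = cosh t ^ 2 - 1 := by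
      have := Real.cosh_sq' t; linarith
    have h3' : HasDerivAt (fun t : ℝ => sinh t / (cosh t + 1)) (1 / (cosh t + 1)) t := by
      convert h3 using 1
      have hc2 : (cosh t + 1) ^ 2 ≠ 0 := pow_ne_zero _ hc
      field_simp
      linear_combination hsq
    have h4 := h2.mul h3'
    refine h4.congr_deriv ?_
    symm
    field_simp
    ring_nf
    linear_combination z * hsq
  have hlim : Tendsto F atTop (nhds 0) := by
    have hbound : ∀ᶠ t in atTop, |F t| ≤ exp (2 / z) * exp (-t) := by
      filter_upwards [eventually_ge_atTop (0:ℝ)] with t ht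
      have h1 : (0:ℝ) < cosh t + 1 := by positivity
      have hsc : sinh t / (cosh t + 1) ≤ 1 := by
        rw [div_le_one h1]
        nlinarith [Real.cosh_sub_sinh t, Real.exp_pos (-t)]
      have hsn : 0 ≤ sinh t / (cosh t + 1) :=
        div_nonneg (Real.sinh_nonneg_iff.2 ht) h1.le
      rw [hF, abs_of_nonneg (by positivity)]
      calc exp (-z * cosh t) * (sinh t / (cosh t + 1)) ≤ exp (-z * cosh t) * 1 :=
            mul_le_mul_of_nonneg_left hsc (Real.exp_pos _).le
        _ = |exp (-z * cosh t)| := by rw [mul_one, abs_of_pos (Real.exp_pos _)]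
        _ ≤ _ := g0_abs_le hz t ht
    have htend : Tendsto (fun t : ℝ => exp (2 / z) * exp (-t)) atTop (nhds 0) := by
      simpa using (Real.tendsto_exp_neg_atTop_nhds_zero).const_mul (exp (2 / z))
    refine squeeze_zero_norm' ?_ htend
    simpa [Real.norm_eq_abs] using hbound
  have := integral_Ioi_of_hasDerivAt_of_tendsto (f := F)
    (f' := fun t => exp (-z * cosh t) * (1 / (cosh t + 1) - z * (cosh t - 1)))
    (a := 0) (m := 0)
    (hderiv 0).continuousAt.continuousWithinAt
    (fun x _ => hderiv x) (int_gq hz) hlim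
  rw [this, hF]
  simp

end


section
variable {z : ℝ}

lemma besselK0_eq : besselK 0 z = ∫ t in Ioi (0:ℝ), exp (-z * cosh t) := by
  simp [besselK]

lemma besselK1_eq : besselK 1 z = ∫ t in Ioi (0:ℝ), exp (-z * cosh t) * cosh t := by
  simp [besselK]

lemma besselK0_pos (hz : 0 < z) : 0 < besselK 0 z := by
  rw [besselK0_eq]
  exact integral_pos_aux (int_g0 hz) (fun t _ => Real.exp_pos _)

lemma gc_eq (hz : 0 < z) :
    ∫ t in Ioi (0:ℝ), exp (-z * cosh t) * (cosh t - 1) = besselK 1 z - besselK 0 z := by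
  rw [besselK1_eq, besselK0_eq, ← integral_sub (int_g1 hz) (int_g0 hz)]
  congr 1; ext t; ring

lemma gs_eq (hz : 0 < z) :
    ∫ t in Ioi (0:ℝ), exp (-z * cosh t) * (1 / (cosh t + 1))
      = z * (besselK 1 z - besselK 0 z) := by
  have h0 := ibp hz
  have hsplit : ∫ t in Ioi (0:ℝ), exp (-z * cosh t) * (1 / (cosh t + 1) - z * (cosh t - 1))
      = (∫ t in Ioi (0:ℝ), exp (-z * cosh t) * (1 / (cosh t + 1)))
        - z * ∫ t in Ioi (0:ℝ), exp (-z * cosh t) * (cosh t - 1) := by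
    rw [← MeasureTheory.integral_const_mul, ← integral_sub (int_gs hz) ((int_gc hz).const_mul z)]
    congr 1; ext t; ring
  rw [hsplit, gc_eq hz] at h0
  linarith

lemma ratio_upper (hz : 0 < z) :
    2 * z * (besselK 1 z - besselK 0 z) < besselK 0 z := by
  have hpos : 0 < ∫ t in Ioi (0:ℝ), exp (-z * cosh t) * (1 - 2 * (1 / (cosh t + 1))) := by
    refine integral_pos_aux ?_ (fun t ht => ?_)
    · have h := (int_g0 hz).sub ((int_gs hz).const_mul 2)
      exact h.congr (ae_of_all _ fun t => by simp [Pi.sub_apply]; ring)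
    · have hct : 1 < cosh t := Real.one_lt_cosh.2 (ne_of_gt ht)
      have hc1 : (0:ℝ) < cosh t + 1 := by linarith
      have : 2 * (1 / (cosh t + 1)) < 1 := by
        rw [mul_one_div, div_lt_one hc1]; linarith
      have h2 : 0 < 1 - 2 * (1 / (cosh t + 1)) := by linarith
      positivity
  have heq : ∫ t in Ioi (0:ℝ), exp (-z * cosh t) * (1 - 2 * (1 / (cosh t + 1)))
      = besselK 0 z - 2 * (z * (besselK 1 z - besselK 0 z)) := by
    rw [← gs_eq hz, besselK0_eq, ← MeasureTheory.integral_const_mul,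
      ← integral_sub (int_g0 hz) ((int_gs hz).const_mul 2)]
    congr 1; ext t; ring
  rw [heq] at hpos
  linarith

lemma ratio_lower (hz : 0 < z) :
    besselK 0 z < 2 * (z + 1) * (besselK 1 z - besselK 0 z) := by
  have hpos : 0 < ∫ t in Ioi (0:ℝ),
      exp (-z * cosh t) * (2 * (1 / (cosh t + 1)) + 2 * (cosh t - 1) - 1) := by
    refine integral_pos_aux ?_ (fun t ht => ?_)
    · have h := (((int_gs hz).const_mul 2).add ((int_gc hz).const_mul 2)).sub (int_g0 hz)
      exact h.congr (ae_of_all _ fun t => by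
        simp [Pi.sub_apply, Pi.add_apply]; ring)
    · have hct : 1 < cosh t := Real.one_lt_cosh.2 (ne_of_gt ht)
      have hc1 : (0:ℝ) < cosh t + 1 := by linarith
      have heq2 : 2 * (1 / (cosh t + 1)) + 2 * (cosh t - 1) - 1
          = (2 * cosh t + 1) * (cosh t - 1) / (cosh t + 1) := by
        field_simp; ring
      rw [heq2]
      have h2 : 0 < (2 * cosh t + 1) * (cosh t - 1) / (cosh t + 1) := by
        apply div_pos (mul_pos (by linarith) (by linarith)) hc1
      positivity
  have heq : ∫ t in Ioi (0:ℝ),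
      exp (-z * cosh t) * (2 * (1 / (cosh t + 1)) + 2 * (cosh t - 1) - 1)
      = 2 * (z * (besselK 1 z - besselK 0 z)) + 2 * (besselK 1 z - besselK 0 z)
        - besselK 0 z := by
    have hadd : Integrable (fun t : ℝ => 2 * (exp (-z * cosh t) * (1 / (cosh t + 1)))
        + 2 * (exp (-z * cosh t) * (cosh t - 1))) (volume.restrict (Ioi (0:ℝ))) := by
      have h := ((int_gs hz).const_mul 2).add ((int_gc hz).const_mul 2)
      exact h.congr (ae_of_all _ fun t => rfl)
    rw [← gs_eq hz, ← gc_eq hz, besselK0_eq, ← MeasureTheory.integral_const_mul,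
      ← MeasureTheory.integral_const_mul,
      ← integral_add ((int_gs hz).const_mul 2) ((int_gc hz).const_mul 2),
      ← integral_sub hadd (int_g0 hz)]
    congr 1; ext t; ring
  rw [heq] at hpos
  linarith

end


-- polynomial certificate
set_option maxHeartbeats 2000000 in
lemma poly_main (z a b : ℝ) (hz : 0 < z)
    (h1 : 2 * z * (b - a) < a) (h2 : a < 2 * (z + 1) * (b - a)) :
    |4 * z ^ 4 * a ^ 6 - 16 * z ^ 3 * a ^ 5 * b - z ^ 2 * (120 + 11 * z ^ 2) * a ^ 4 * b ^ 2 +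
        4 * z * (-40 + 3 * z ^ 2) * a ^ 3 * b ^ 3 +
        2 * (-16 + 66 * z ^ 2 + 5 * z ^ 4) * a ^ 2 * b ^ 4 +
        4 * z * (32 + z ^ 2) * a * b ^ 5 - 3 * z ^ 2 * (8 + z ^ 2) * b ^ 6|
      < 9 * (z ^ 2 * a ^ 3 + z * a ^ 2 * b - (2 + z ^ 2) * a * b ^ 2 - z * b ^ 3) ^ 2 := by
  have hu : 0 < a - 2 * z * (b - a) := by linarith
  have hw : 0 < 2 * (z + 1) * (b - a) - a := by linarith
  set u := a - 2 * z * (b - a) with hud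
  set w := 2 * (z + 1) * (b - a) - a with hwd
  set N := 4 * z ^ 4 * a ^ 6 - 16 * z ^ 3 * a ^ 5 * b - z ^ 2 * (120 + 11 * z ^ 2) * a ^ 4 * b ^ 2 +
      4 * z * (-40 + 3 * z ^ 2) * a ^ 3 * b ^ 3 +
      2 * (-16 + 66 * z ^ 2 + 5 * z ^ 4) * a ^ 2 * b ^ 4 +
      4 * z * (32 + z ^ 2) * a * b ^ 5 - 3 * z ^ 2 * (8 + z ^ 2) * b ^ 6 with hN
  set D := z ^ 2 * a ^ 3 + z * a ^ 2 * b - (2 + z ^ 2) * a * b ^ 2 - z * b ^ 3 with hD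
  have key1 : 0 < 64 * (9 * D ^ 2 + N) := by
    have e : 64 * (9 * D ^ 2 + N) = 16 * u ^ 2 * w ^ 4 + 192 * u ^ 3 * w ^ 3 + 864 * u ^ 4 * w ^ 2 + 1728 * u ^ 5 * w + 1296 * u ^ 6 + 360 * z * u * w ^ 5 + 5464 * z * u ^ 2 * w ^ 4 + 31344 * z * u ^ 3 * w ^ 3 + 84240 * z * u ^ 4 * w ^ 2 + 103464 * z * u ^ 5 * w + 43416 * z * u ^ 6 + 329 * z ^ 2 * w ^ 6 + 8738 * z ^ 2 * u * w ^ 5 + 75415 * z ^ 2 * u ^ 2 * w ^ 4 + 295708 * z ^ 2 * u ^ 3 * w ^ 3 + 566487 * z ^ 2 * u ^ 4 * w ^ 2 + 500418 * z ^ 2 * u ^ 5 * w + 161865 * z ^ 2 * u ^ 6 + 3228 * z ^ 3 * w ^ 6 + 55004 * z ^ 3 * u * w ^ 5 + 340352 * z ^ 3 * u ^ 2 * w ^ 4 + 990648 * z ^ 3 * u ^ 3 * w ^ 3 + 1437660 * z ^ 3 * u ^ 4 * w ^ 2 + 1005804 * z ^ 3 * u ^ 5 * w + 270216 * z ^ 3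 * u ^ 6 + 11677 * z ^ 4 * w ^ 6 + 147994 * z ^ 4 * u * w ^ 5 + 698183 * z ^ 4 * u ^ 2 * w ^ 4 + 1584092 * z ^ 4 * u ^ 3 * w ^ 3 + 1863483 * z ^ 4 * u ^ 4 * w ^ 2 + 1097514 * z ^ 4 * u ^ 5 * w + 256257 * z ^ 4 * u ^ 6 + 20148 * z ^ 5 * w ^ 6 + 197832 * z ^ 5 * u * w ^ 5 + 739932 * z ^ 5 * u ^ 2 * w ^ 4 + 1384368 * z ^ 5 * u ^ 3 * w ^ 3 + 1389612 * z ^ 5 * u ^ 4 * w ^ 2 + 717576 * z ^ 5 * u ^ 5 * w + 150084 * z ^ 5 * u ^ 6 + 17592 * z ^ 6 * w ^ 6 + 137680 * z ^ 6 * u * w ^ 5 + 429640 * z ^ 6 * u ^ 2 * w ^ 4 + 693600 * z ^ 6 * u ^ 3 * w ^ 3 + 615880 * z ^ 6 * u ^ 4 * w ^ 2 + 286672 * z ^ 6 * u ^ 5 * w + 54840 * z ^ 6 * u ^ 6 + 7360 * z ^ 7 * w ^ 6 + 48512 * z ^ 7 * u * w ^ 5 + 132160 * z ^ 7 * u ^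 2 * w ^ 4 + 190720 * z ^ 7 * u ^ 3 * w ^ 3 + 153920 * z ^ 7 * u ^ 4 * w ^ 2 + 65920 * z ^ 7 * u ^ 5 * w + 11712 * z ^ 7 * u ^ 6 + 1152 * z ^ 8 * w ^ 6 + 6912 * z ^ 8 * u * w ^ 5 + 17280 * z ^ 8 * u ^ 2 * w ^ 4 + 23040 * z ^ 8 * u ^ 3 * w ^ 3 + 17280 * z ^ 8 * u ^ 4 * w ^ 2 + 6912 * z ^ 8 * u ^ 5 * w + 1152 * z ^ 8 * u ^ 6 := by
      rw [hN, hD, hud, hwd]; ring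
    rw [e]; positivity
  have key2 : 0 < 64 * (9 * D ^ 2 - N) := by
    have e : 64 * (9 * D ^ 2 - N) = 272 * u ^ 2 * w ^ 4 + 3264 * u ^ 3 * w ^ 3 + 14688 * u ^ 4 * w ^ 2 + 29376 * u ^ 5 * w + 22032 * u ^ 6 + 360 * z * u * w ^ 5 + 6488 * z * u ^ 2 * w ^ 4 + 42096 * z * u ^ 3 * w ^ 3 + 125712 * z * u ^ 4 * w ^ 2 + 172584 * z * u ^ 5 * w + 84888 * z * u ^ 6 + 121 * z ^ 2 * w ^ 6 + 3970 * z ^ 2 * u * w ^ 5 + 39623 * z ^ 2 * u ^ 2 * w ^ 4 + 174812 * z ^ 2 * u ^ 3 * w ^ 3 + 374247 * z ^ 2 * u ^ 4 * w ^ 2 + 373410 * z ^ 2 * u ^ 5 * w + 138969 * z ^ 2 * u ^ 6 + 732 * z ^ 3 * w ^ 6 + 14476 * z ^ 3 * u * w ^ 5 + 101008 * z ^ 3 * u ^ 2 * w ^ 4 + 327384 * z ^ 3 * u ^ 3 * w ^ 3 + 529020 * z ^ 3 * u ^ 4 * w ^ 2 + 415260 * z ^ 3 * u ^ 5 * w +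 126360 * z ^ 3 * u ^ 6 + 1715 * z ^ 4 * w ^ 6 + 24230 * z ^ 4 * u * w ^ 5 + 125713 * z ^ 4 * u ^ 2 * w ^ 4 + 312964 * z ^ 4 * u ^ 3 * w ^ 3 + 406821 * z ^ 4 * u ^ 4 * w ^ 2 + 266742 * z ^ 4 * u ^ 5 * w + 69687 * z ^ 4 * u ^ 6 + 1884 * z ^ 5 * w ^ 6 + 19752 * z ^ 5 * u * w ^ 5 + 79140 * z ^ 5 * u ^ 2 * w ^ 4 + 161328 * z ^ 5 * u ^ 3 * w ^ 3 + 178404 * z ^ 5 * u ^ 4 * w ^ 2 + 101928 * z ^ 5 * u ^ 5 * w + 23580 * z ^ 5 * u ^ 6 + 912 * z ^ 6 * w ^ 6 + 7328 * z ^ 6 * u * w ^ 5 + 24752 * z ^ 6 * u ^ 2 * w ^ 4 + 43968 * z ^ 6 * u ^ 3 * w ^ 3 + 42992 * z ^ 6 * u ^ 4 * w ^ 2 + 21920 * z ^ 6 * u ^ 5 * w + 4560 * z ^ 6 * u ^ 6 + 128 * z ^ 7 * w ^ 6 + 1024 * z ^ 7 * u * w ^ 5 + 3200 * z ^ 7 *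 u ^ 2 * w ^ 4 + 5120 * z ^ 7 * u ^ 3 * w ^ 3 + 4480 * z ^ 7 * u ^ 4 * w ^ 2 + 2048 * z ^ 7 * u ^ 5 * w + 384 * z ^ 7 * u ^ 6 := by
      rw [hN, hD, hud, hwd]; ring
    rw [e]; positivity
  rw [abs_lt]
  constructor <;> nlinarith [key1, key2]


theorem hfun_bound (z : ℝ) (hz : 0 < z) : |hfun z| < 9 / 8 * z := by
  have h1 := ratio_upper hz
  have h2 := ratio_lower hz
  have ha := besselK0_pos hz
  have habs := poly_main z (besselK 0 z) (besselK 1 z) hz h1 h2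
  unfold hfun
  set a := besselK 0 z with hadef
  set b := besselK 1 z with hbdef
  set N := 4 * z ^ 4 * a ^ 6 - 16 * z ^ 3 * a ^ 5 * b - z ^ 2 * (120 + 11 * z ^ 2) * a ^ 4 * b ^ 2 +
      4 * z * (-40 + 3 * z ^ 2) * a ^ 3 * b ^ 3 +
      2 * (-16 + 66 * z ^ 2 + 5 * z ^ 4) * a ^ 2 * b ^ 4 +
      4 * z * (32 + z ^ 2) * a * b ^ 5 - 3 * z ^ 2 * (8 + z ^ 2) * b ^ 6 with hN
  set D := z ^ 2 * a ^ 3 + z * a ^ 2 * b - (2 + z ^ 2) * a * b ^ 2 - z * b ^ 3 with hD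
  have hb : a < b := by nlinarith [h2, ha, hz]
  have hbpos : 0 < b := lt_trans ha hb
  have hDneg : D < 0 := by
    have e : D = (a ^ 2 - b ^ 2) * (z ^ 2 * a + z * b) - 2 * (a * b ^ 2) := by rw [hD]; ring
    have hb2 : a ^ 2 - b ^ 2 < 0 := by nlinarith
    have hzz : 0 < z ^ 2 * a + z * b := by positivity
    have := mul_neg_of_neg_of_pos hb2 hzz
    have h4 : 0 < a * b ^ 2 := by positivity
    rw [e]; linarith
  have hD2 : 0 < D ^ 2 := pow_two_pos_of_ne_zero (ne_of_lt hDneg)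
  rw [abs_div, abs_mul, abs_of_pos (by positivity : (0:ℝ) < z / 8),
    abs_of_pos hD2, div_lt_iff₀ hD2]
  nlinarith [mul_lt_mul_of_pos_left habs (show (0:ℝ) < z / 8 by positivity), hD2]
end
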